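/- arXiv:2403.16769 — 9 statements merged into one kernel-verified Lean document; each statement's English description precedes it below -/
import Mathlib

section
/- For every integer n ≥ 2, the one-relator group Γₙ = ⟨a, b | [a, b]ⁿ = 1⟩ is not virtually solvable: no finite-index subgroup of Γₙ is solvable. -/
open scoped commutatorElement

/-- The one-relator group `Γₙ = ⟨a, b | [a, b]ⁿ = 1⟩`, realized as the quotient of the free
group on two generators by the normal closure of `([a, b])ⁿ`. -/
abbrev GammaGroup (n : ℕ) : Type :=
  PresentedGroup ({⁅FreeGroup.of true, FreeGroup.of false⁆ ^ n} : Set (FreeGroup Bool))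


namespace GammaNVS
open Equiv Equiv.Perm Subgroup

def tr (m : ℤ) : Perm ℤ := Equiv.addLeft m
@[simp] lemma tr_apply (m z : ℤ) : tr m z = m + z := rfl
@[simp] lemma tr_inv_apply (m z : ℤ) : (tr m)⁻¹ z = z - m := by
  simp [tr, Equiv.Perm.inv_def, sub_eq_neg_add]
lemma tr_mul (a b : ℤ) : tr a * tr b = tr (a + b) := by
  ext z; simp [mul_apply, add_assoc]

def revfun (m : ℤ) : ℤ → ℤ := fun z => if 0 ≤ z ∧ z ≤ m then m - z else z
lemma revfun_invol (m : ℤ) : Function.Involutive (revfun m) := by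
  intro z; unfold revfun; split_ifs <;> omega
def rev (m : ℤ) : Perm ℤ := (revfun_invol m).toPerm
@[simp] lemma rev_apply (m z : ℤ) : rev m z = if 0 ≤ z ∧ z ≤ m then m - z else z := rfl
@[simp] lemma rev_inv (m : ℤ) : (rev m)⁻¹ = rev m := rfl

section W
variable (n : ℕ)

def t : Perm ℤ := tr 1
def v : Perm ℤ := rev (2 * n - 2)

lemma w_apply (hn : 2 ≤ n) (z : ℤ) :
    (⁅t, v n⁆ : Perm ℤ) z =
      if 0 ≤ z ∧ z ≤ 2 * n - 3 then z + 2
      else if z = 2 * n - 2 then 0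
      else if z = 2 * n - 1 then 1 else z := by
  have h2 : (2:ℤ) ≤ (n:ℤ) := by exact_mod_cast hn
  show (t * v n * t⁻¹ * (v n)⁻¹) z = _
  simp only [mul_apply, t, v, rev_inv, rev_apply, tr_apply, tr_inv_apply]
  split_ifs <;> omega

lemma w_pow_apply (hn : 2 ≤ n) (j : ℕ) (hj : j ≤ n) (z : ℤ)
    (hz0 : 0 ≤ z) (hz1 : z ≤ 2 * n - 1) :
    ((⁅t, v n⁆ : Perm ℤ) ^ j) z =
      if z + 2 * j ≤ 2 * n - 1 then z + 2 * j else z + 2 * j - 2 * n := by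
  have h2 : (2:ℤ) ≤ (n:ℤ) := by exact_mod_cast hn
  induction j with
  | zero => simp; omega
  | succ i ih =>
    have hi : i ≤ n := by omega
    rw [pow_succ', mul_apply, ih hi]
    have hii : (i:ℤ) ≤ (n:ℤ) := by exact_mod_cast hi
    have hji : ((i+1 : ℕ):ℤ) = (i:ℤ) + 1 := by push_cast; ring
    by_cases hca : z + 2 * i ≤ 2 * n - 1
    · rw [if_pos hca, w_apply n hn]
      split_ifs <;> omega
    · rw [if_neg hca, w_apply n hn]
      have hj1 : (i:ℤ) + 1 ≤ n := by exact_mod_cast hj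
      split_ifs <;> omega

lemma w_fix (hn : 2 ≤ n) (z : ℤ) (hz : z < 0 ∨ 2 * n - 1 < z) : (⁅t, v n⁆ : Perm ℤ) z = z := by
  rw [w_apply n hn]; split_ifs <;> omega

lemma w_pow_n (hn : 2 ≤ n) : (⁅t, v n⁆ : Perm ℤ) ^ n = 1 := by
  have h2 : (2:ℤ) ≤ (n:ℤ) := by exact_mod_cast hn
  ext z
  by_cases hz : 0 ≤ z ∧ z ≤ 2 * n - 1
  · rw [w_pow_apply n hn n le_rfl z hz.1 hz.2]
    simp only [Perm.coe_one, id_eq]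
    split_ifs <;> omega
  · have : ∀ j : ℕ, ((⁅t, v n⁆ : Perm ℤ) ^ j) z = z := by
      intro j; induction j with
      | zero => simp
      | succ i ih => rw [pow_succ', mul_apply, ih, w_fix n hn z (by omega)]
    rw [this n]; simp

end W
/-- the 3-cycle `x ↦ y ↦ z ↦ x` -/
def c3 (x y z : ℤ) : Perm ℤ := Equiv.swap x z * Equiv.swap x y
/-- product of two disjoint swaps -/
def p2 (x y z u : ℤ) : Perm ℤ := Equiv.swap x y * Equiv.swap z u

lemma c3_apply (x y z : ℤ) (hxy : x ≠ y) (hxz : x ≠ z) (hyz : y ≠ z) (a : ℤ) :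
    c3 x y z a = if a = x then y else if a = y then z else if a = z then x else a := by
  simp only [c3, mul_apply, Equiv.swap_apply_def]
  split_ifs <;> omega

lemma p2_apply (x y z u : ℤ) (hxy : x ≠ y) (hzu : z ≠ u) (hxz : x ≠ z) (hxu : x ≠ u)
    (hyz : y ≠ z) (hyu : y ≠ u) (a : ℤ) :
    p2 x y z u a = if a = x then y else if a = y then x else if a = z then u
      else if a = u then z else a := by
  simp only [p2, mul_apply, Equiv.swap_apply_def]
  split_ifs <;> omega

lemma conj_swap (σ : Perm ℤ) (x y : ℤ) : σ * Equiv.swap x y * σ⁻¹ = Equiv.swap (σ x) (σ y) :=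
  (Equiv.swap_apply_apply σ x y).symm

lemma conj_c3 (σ : Perm ℤ) (x y z : ℤ) : σ * c3 x y z * σ⁻¹ = c3 (σ x) (σ y) (σ z) := by
  have : σ * c3 x y z * σ⁻¹ = (σ * Equiv.swap x z * σ⁻¹) * (σ * Equiv.swap x y * σ⁻¹) := by
    simp only [c3]; group
  rw [this, conj_swap, conj_swap, c3]

lemma conj_p2 (σ : Perm ℤ) (x y z u : ℤ) : σ * p2 x y z u * σ⁻¹ = p2 (σ x) (σ y) (σ z) (σ u) := by
  have : σ * p2 x y z u * σ⁻¹ = (σ * Equiv.swap x y * σ⁻¹) * (σ * Equiv.swap z u * σ⁻¹) := by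
    simp only [p2]; group
  rw [this, conj_swap, conj_swap, p2]

section H
variable (n : ℕ)

/-- `h := [w, t]` is the 3-cycle `(0 2 2n)`. -/
lemma h_eq (hn : 2 ≤ n) : (⁅⁅t, v n⁆, t⁆ : Perm ℤ) = c3 0 2 (2 * n) := by
  have h2 : (2:ℤ) ≤ (n:ℤ) := by exact_mod_cast hn
  have key : (⁅t, v n⁆ : Perm ℤ) * t = c3 0 2 (2 * n) * (t * ⁅t, v n⁆) := by
    ext z
    simp only [mul_apply]
    rw [w_apply n hn z, show (t : Perm ℤ) z = 1 + z from rfl]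
    rw [show ∀ y : ℤ, (t : Perm ℤ) y = 1 + y from fun _ => rfl]
    rw [w_apply n hn, c3_apply 0 2 (2*n) (by omega) (by omega) (by omega)]
    split_ifs <;> omega
  have : (⁅⁅t, v n⁆, t⁆ : Perm ℤ) = ((⁅t, v n⁆ : Perm ℤ) * t) * (t * ⁅t, v n⁆)⁻¹ := by
    rw [commutatorElement_def]; group
  rw [this, key, mul_inv_cancel_right]

end H
lemma c3_inv (x y z : ℤ) : (c3 x y z)⁻¹ = c3 x z y := by
  simp [c3, mul_inv_rev]

set_option maxHeartbeats 1000000 in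
/-- key identity -/
lemma key_identity (A : ℤ) (hA : 4 ≤ A) :
    ⁅c3 0 2 A, c3 A (A + 2) (A + A)⁆ * c3 0 2 A = p2 0 2 A (A + 2) := by
  have e1 : ⁅c3 0 2 A, c3 A (A + 2) (A + A)⁆ * c3 0 2 A =
      (c3 0 2 A * c3 A (A + 2) (A + A) * (c3 0 2 A)⁻¹) * ((c3 A (A + 2) (A + A))⁻¹ * c3 0 2 A) := by
    rw [commutatorElement_def]; group
  rw [e1, conj_c3, c3_inv]
  have hA0 : c3 0 2 A A = 0 := by rw [c3_apply 0 2 A (by omega) (by omega) (by omega)]; split_ifs <;> omega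
  have hA1 : c3 0 2 A (A + 2) = A + 2 := by
    rw [c3_apply 0 2 A (by omega) (by omega) (by omega)]; split_ifs <;> omega
  have hA2 : c3 0 2 A (A + A) = A + A := by
    rw [c3_apply 0 2 A (by omega) (by omega) (by omega)]; split_ifs <;> omega
  rw [hA0, hA1, hA2]
  ext a
  simp only [mul_apply]
  rw [c3_apply 0 2 A (by omega) (by omega) (by omega),
    c3_apply A (A + A) (A + 2) (by omega) (by omega) (by omega),
    c3_apply 0 (A + 2) (A + A) (by omega) (by omega) (by omega),
    p2_apply 0 2 A (A + 2) (by omega) (by omega) (by omega) (by omega) (by omega) (by omega)]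
  split_ifs <;> omega

lemma p2_chain (B C : ℤ) : p2 0 2 B (B + 2) * p2 B (B + 2) C (C + 2) = p2 0 2 C (C + 2) := by
  simp only [p2]
  calc Equiv.swap (0:ℤ) 2 * Equiv.swap B (B+2) * (Equiv.swap B (B+2) * Equiv.swap C (C+2))
      = Equiv.swap (0:ℤ) 2 * (Equiv.swap B (B+2) * Equiv.swap B (B+2)) * Equiv.swap C (C+2) := by
        group
    _ = Equiv.swap (0:ℤ) 2 * Equiv.swap C (C+2) := by rw [Equiv.swap_mul_self]; group

section Members
variable {R : Subgroup (Perm ℤ)} {n : ℕ}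

lemma tr_mem (ht : t ∈ R) : ∀ m : ℤ, tr m ∈ R := by
  have hnat : ∀ j : ℕ, tr j ∈ R := by
    intro j; induction j with
    | zero =>
      have : tr ((0:ℕ):ℤ) = 1 := by ext z; simp
      rw [this]; exact one_mem R
    | succ i ih =>
      have : tr ((i:ℤ) + 1) = tr i * t := by rw [t, tr_mul]
      push_cast
      rw [this]; exact mul_mem ih ht
  intro m
  rcases Int.natAbs_eq m with h | h
  · rw [h]; exact hnat _
  · have : tr m = (tr (m.natAbs))⁻¹ := by
      ext z
      have hz : tr m z = m + z := rfl
      rw [hz, h]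
      simp [tr, Equiv.Perm.inv_def, sub_eq_neg_add]
    rw [this]; exact inv_mem (hnat _)

lemma w_mem (ht : t ∈ R) (hv : v n ∈ R) : (⁅t, v n⁆ : Perm ℤ) ∈ R := by
  rw [commutatorElement_def]
  exact mul_mem (mul_mem (mul_mem ht hv) (inv_mem ht)) (inv_mem hv)

lemma h_mem (hn : 2 ≤ n) (ht : t ∈ R) (hv : v n ∈ R) : c3 0 2 (2 * n) ∈ R := by
  rw [← h_eq n hn, commutatorElement_def]
  have hw := w_mem ht hv
  exact mul_mem (mul_mem (mul_mem hw ht) (inv_mem hw)) (inv_mem ht)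

lemma sigma_mem (hn : 2 ≤ n) (ht : t ∈ R) (hv : v n ∈ R) :
    c3 (2 * n) (2 * n + 2) (2 * n + 2 * n) ∈ R := by
  have h1 : tr (2 * n) * c3 0 2 (2 * n) * (tr (2 * n))⁻¹ ∈ R :=
    mul_mem (mul_mem (tr_mem ht _) (h_mem hn ht hv)) (inv_mem (tr_mem ht _))
  rwa [conj_c3, tr_apply, tr_apply, tr_apply, add_zero] at h1

lemma gpair_mem (hn : 2 ≤ n) (ht : t ∈ R) (hv : v n ∈ R) :
    p2 0 2 (2 * n) (2 * n + 2) ∈ R := by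
  have h2 : (2:ℤ) ≤ (n:ℤ) := by exact_mod_cast hn
  rw [← key_identity (2 * n) (by omega), commutatorElement_def]
  have hA := h_mem hn ht hv
  have hB := sigma_mem hn ht hv
  exact mul_mem (mul_mem (mul_mem (mul_mem hA hB) (inv_mem hA)) (inv_mem hB)) hA

lemma doubling_mem (hn : 2 ≤ n) (ht : t ∈ R) (hv : v n ∈ R) :
    ∀ j : ℕ, p2 0 2 (2 * n * (j + 1)) (2 * n * (j + 1) + 2) ∈ R := by
  intro j; induction j with
  | zero =>
    have : (2 * (n:ℤ) * (((0:ℕ):ℤ) + 1)) = 2 * n := by push_cast; ring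
    rw [this]; exact gpair_mem hn ht hv
  | succ i ih =>
    have hshift : tr (2 * n * (i + 1)) * p2 0 2 (2 * n) (2 * n + 2) * (tr (2 * n * (i + 1)))⁻¹ ∈ R :=
      mul_mem (mul_mem (tr_mem ht _) (gpair_mem hn ht hv)) (inv_mem (tr_mem ht _))
    rw [conj_p2, tr_apply, tr_apply, tr_apply, tr_apply] at hshift
    have e2 : (2 * (n:ℤ) * (↑i + 1) + 0) = 2 * n * (i+1) := by ring
    have e3 : (2 * (n:ℤ) * (↑i + 1) + 2 * n) = 2 * n * ((i+1)+1) := by ring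
    have e4 : (2 * (n:ℤ) * (↑i + 1) + (2 * n + 2)) = 2 * n * ((i+1)+1) + 2 := by ring
    rw [e2, e3, e4] at hshift
    have := mul_mem ih hshift
    rw [p2_chain] at this
    push_cast
    convert this using 3 <;> push_cast <;> ring

end Members
section Pairs
variable {R : Subgroup (Perm ℤ)} {n k : ℕ}

/-- paired swap `(2a 2b)(K+2a K+2b)` -/
def ps (K a b : ℤ) : Perm ℤ := p2 (2*a) (2*b) (K + 2*a) (K + 2*b)

lemma ps_eval (K a b x : ℤ) (ha : 0 ≤ a) (hab : a < b) (hbK : 2*b < K) :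
    ps K a b x = if x = 2*a then 2*b else if x = 2*b then 2*a
      else if x = K + 2*a then K + 2*b else if x = K + 2*b then K + 2*a else x := by
  unfold ps
  rw [p2_apply _ _ _ _ (by omega) (by omega) (by omega) (by omega) (by omega) (by omega)]

lemma ps_conj (K a b : ℤ) (ha : 0 ≤ a) (hab : a + 1 < b) (hbK : 2*b < K) :
    ps K a b = ps K (b-1) b * ps K a (b-1) * (ps K (b-1) b)⁻¹ := by
  have hc : ∀ x : ℤ, ps K (b-1) b x = if x = 2*(b-1) then 2*b else if x = 2*b then 2*(b-1)
      else if x = K + 2*(b-1) then K + 2*b else if x = K + 2*b then K + 2*(b-1) else x :=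
    fun x => ps_eval K (b-1) b x (by omega) (by omega) (by omega)
  show ps K a b = ps K (b-1) b * p2 (2*a) (2*(b-1)) (K + 2*a) (K + 2*(b-1))
    * (ps K (b-1) b)⁻¹
  rw [conj_p2, hc, hc, hc, hc]
  have e1 : ((if (2*a : ℤ) = 2*(b-1) then 2*b else if 2*a = 2*b then 2*(b-1)
    else if 2*a = K + 2*(b-1) then K + 2*b else if 2*a = K + 2*b then K + 2*(b-1)
    else 2*a) : ℤ) = 2*a := by split_ifs <;> omega
  have e2 : ((if (2*(b-1) : ℤ) = 2*(b-1) then 2*b else if 2*(b-1) = 2*b then 2*(b-1)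
    else if 2*(b-1) = K + 2*(b-1) then K + 2*b else if 2*(b-1) = K + 2*b then K + 2*(b-1)
    else 2*(b-1)) : ℤ) = 2*b := by split_ifs <;> omega
  have e3 : ((if (K + 2*a : ℤ) = 2*(b-1) then 2*b else if K + 2*a = 2*b then 2*(b-1)
    else if K + 2*a = K + 2*(b-1) then K + 2*b else if K + 2*a = K + 2*b then K + 2*(b-1)
    else K + 2*a) : ℤ) = K + 2*a := by split_ifs <;> omega
  have e4 : ((if (K + 2*(b-1) : ℤ) = 2*(b-1) then 2*b else if K + 2*(b-1) = 2*b then 2*(b-1)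
    else if K + 2*(b-1) = K + 2*(b-1) then K + 2*b else if K + 2*(b-1) = K + 2*b
    then K + 2*(b-1) else K + 2*(b-1)) : ℤ) = K + 2*b := by split_ifs <;> omega
  rw [e1, e2, e3, e4]
  rfl

lemma ps_adj_mem (hn : 2 ≤ n) (hk : 1 ≤ k) (ht : t ∈ R) (hv : v n ∈ R) (a : ℤ) :
    ps (2*(n:ℤ)*k) a (a+1) ∈ R := by
  have hd := doubling_mem (R := R) hn ht hv (k-1)
  have e1 : ((k-1 : ℕ) : ℤ) + 1 = (k:ℤ) := by omega
  rw [e1] at hd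
  have hconj : tr (2*a) * p2 0 2 (2*(n:ℤ)*k) (2*(n:ℤ)*k+2) * (tr (2*a))⁻¹ ∈ R :=
    mul_mem (mul_mem (tr_mem ht _) hd) (inv_mem (tr_mem ht _))
  rw [conj_p2, tr_apply, tr_apply, tr_apply, tr_apply] at hconj
  have : ps (2*(n:ℤ)*k) a (a+1) =
      p2 (2*a+0) (2*a+2) (2*a + 2*(n:ℤ)*k) (2*a + (2*(n:ℤ)*k+2)) := by
    unfold ps; congr 1 <;> ring
  rw [this]; exact hconj

lemma ps_mem (hn : 2 ≤ n) (hk : 1 ≤ k) (ht : t ∈ R) (hv : v n ∈ R) :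
    ∀ d : ℕ, ∀ a b : ℤ, b = a + 1 + d → 0 ≤ a → b ≤ k → ps (2*(n:ℤ)*k) a b ∈ R := by
  intro d
  induction d with
  | zero =>
    intro a b hb _ _
    have : b = a + 1 := by push_cast at hb; omega
    rw [this]; exact ps_adj_mem hn hk ht hv a
  | succ d ih =>
    intro a b hb ha hbk
    have h2 : (2:ℤ) ≤ (n:ℤ) := by exact_mod_cast hn
    have hkz : (1:ℤ) ≤ (k:ℤ) := by exact_mod_cast hk
    have hKz : 2*(k:ℤ) < 2*(n:ℤ)*(k:ℤ) := by nlinarith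
    have hab : a + 1 < b := by push_cast at hb; omega
    have hb' : b - 1 = a + 1 + (d:ℤ) := by push_cast at hb; omega
    have hc : ps (2*(n:ℤ)*k) (b-1) b ∈ R := by
      have e : b = (b-1) + 1 := by ring
      nth_rewrite 2 [e]
      exact ps_adj_mem hn hk ht hv (b-1)
    have hprev : ps (2*(n:ℤ)*k) a (b-1) ∈ R := ih a (b-1) hb' ha (by omega)
    rw [ps_conj _ a b ha hab (by omega)]
    exact mul_mem (mul_mem hc hprev) (inv_mem hc)

end Pairs
section Embed

lemma viaEmbedding_swap {α β : Type*} [DecidableEq α] [DecidableEq β] (ι : α ↪ β) (i j : α) :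
    (Equiv.swap i j).viaEmbedding ι = Equiv.swap (ι i) (ι j) := by
  ext z
  by_cases hz : z ∈ Set.range ι
  · obtain ⟨x, rfl⟩ := hz
    rw [Equiv.Perm.viaEmbedding_apply]
    rcases eq_or_ne x i with rfl | hxi
    · simp
    · rcases eq_or_ne x j with rfl | hxj
      · simp
      · rw [Equiv.swap_apply_of_ne_of_ne hxi hxj,
          Equiv.swap_apply_of_ne_of_ne (fun h => hxi (ι.injective h))
            (fun h => hxj (ι.injective h))]
  · rw [Equiv.Perm.viaEmbedding_apply_of_notMem _ _ _ hz,
      Equiv.swap_apply_of_ne_of_ne (fun h => hz ⟨i, h.symm⟩) (fun h => hz ⟨j, h.symm⟩)]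

lemma viaEmbedding_commute {α α' β : Type*} (ι₁ : α ↪ β) (ι₂ : α' ↪ β)
    (hdisj : ∀ x y, ι₁ x ≠ ι₂ y) (σ : Perm α) (τ : Perm α') :
    Commute (σ.viaEmbedding ι₁) (τ.viaEmbedding ι₂) := by
  have h1 : ∀ z, z ∉ Set.range ι₁ → σ.viaEmbedding ι₁ z = z := fun z hz =>
    Equiv.Perm.viaEmbedding_apply_of_notMem _ _ _ hz
  have h2 : ∀ z, z ∉ Set.range ι₂ → τ.viaEmbedding ι₂ z = z := fun z hz =>
    Equiv.Perm.viaEmbedding_apply_of_notMem _ _ _ hz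
  have hr1 : ∀ x : α, ι₁ x ∉ Set.range ι₂ := fun x ⟨y, hy⟩ => hdisj x y hy.symm
  have hr2 : ∀ y : α', ι₂ y ∉ Set.range ι₁ := fun y ⟨x, hx⟩ => hdisj x y hx
  unfold Commute SemiconjBy
  ext z
  simp only [Equiv.Perm.mul_apply]
  by_cases hz1 : z ∈ Set.range ι₁
  · obtain ⟨x, rfl⟩ := hz1
    rw [h2 _ (hr1 x), Equiv.Perm.viaEmbedding_apply, h2 _ (hr1 (σ x))]
  · by_cases hz2 : z ∈ Set.range ι₂
    · obtain ⟨y, rfl⟩ := hz2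
      rw [h1 _ (hr2 y), Equiv.Perm.viaEmbedding_apply, h1 _ (hr2 (τ y))]
    · rw [h1 _ hz1, h2 _ hz2, h1 _ hz1]

variable {α : Type*} [DecidableEq α] [Fintype α]

/-- the doubled embedding of `Perm α` into `Perm ℤ` via two disjoint injections -/
noncomputable def pairHom (ι₁ ι₂ : α ↪ ℤ) (hdisj : ∀ x y, ι₁ x ≠ ι₂ y) : Perm α →* Perm ℤ :=
  MonoidHom.mk' (fun σ => σ.viaEmbedding ι₁ * σ.viaEmbedding ι₂) (by
    intro σ τ
    show (σ * τ).viaEmbedding ι₁ * (σ * τ).viaEmbedding ι₂ =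
      σ.viaEmbedding ι₁ * σ.viaEmbedding ι₂ * (τ.viaEmbedding ι₁ * τ.viaEmbedding ι₂)
    have e1 : ∀ ρ ρ' : Perm α, (ρ * ρ').viaEmbedding ι₁ = ρ.viaEmbedding ι₁ * ρ'.viaEmbedding ι₁ :=
      fun ρ ρ' => map_mul (Equiv.Perm.viaEmbeddingHom ι₁) ρ ρ'
    have e2 : ∀ ρ ρ' : Perm α, (ρ * ρ').viaEmbedding ι₂ = ρ.viaEmbedding ι₂ * ρ'.viaEmbedding ι₂ :=
      fun ρ ρ' => map_mul (Equiv.Perm.viaEmbeddingHom ι₂) ρ ρ'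
    rw [e1, e2]
    have hc := viaEmbedding_commute ι₁ ι₂ hdisj τ σ
    calc σ.viaEmbedding ι₁ * τ.viaEmbedding ι₁ * (σ.viaEmbedding ι₂ * τ.viaEmbedding ι₂)
        = σ.viaEmbedding ι₁ * (τ.viaEmbedding ι₁ * σ.viaEmbedding ι₂) * τ.viaEmbedding ι₂ := by
          group
      _ = σ.viaEmbedding ι₁ * (σ.viaEmbedding ι₂ * τ.viaEmbedding ι₁) * τ.viaEmbedding ι₂ := by
          rw [hc.eq]
      _ = σ.viaEmbedding ι₁ * σ.viaEmbedding ι₂ * (τ.viaEmbedding ι₁ * τ.viaEmbedding ι₂) := by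
          group)

lemma pairHom_injective (ι₁ ι₂ : α ↪ ℤ) (hdisj : ∀ x y, ι₁ x ≠ ι₂ y) :
    Function.Injective (pairHom ι₁ ι₂ hdisj) := by
  intro σ τ h
  have hr1 : ∀ x : α, ι₁ x ∉ Set.range ι₂ := fun x ⟨y, hy⟩ => hdisj x y hy.symm
  have happ : ∀ (ρ : Perm α) (x : α), (pairHom ι₁ ι₂ hdisj ρ) (ι₁ x) = ι₁ (ρ x) := by
    intro ρ x
    show (ρ.viaEmbedding ι₁) ((ρ.viaEmbedding ι₂) (ι₁ x)) = _
    rw [Equiv.Perm.viaEmbedding_apply_of_notMem _ _ _ (hr1 x), Equiv.Perm.viaEmbedding_apply]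
  ext x
  have := congrArg (fun (ρ : Perm ℤ) => ρ (ι₁ x)) h
  rw [happ, happ] at this
  exact ι₁.injective this

lemma pairHom_swap (ι₁ ι₂ : α ↪ ℤ) (hdisj : ∀ x y, ι₁ x ≠ ι₂ y) (i j : α) :
    pairHom ι₁ ι₂ hdisj (Equiv.swap i j) =
      Equiv.swap (ι₁ i) (ι₁ j) * Equiv.swap (ι₂ i) (ι₂ j) := by
  show (Equiv.swap i j).viaEmbedding ι₁ * (Equiv.swap i j).viaEmbedding ι₂ = _
  rw [viaEmbedding_swap, viaEmbedding_swap]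

lemma pairHom_range_le {R : Subgroup (Perm ℤ)} (ι₁ ι₂ : α ↪ ℤ) (hdisj : ∀ x y, ι₁ x ≠ ι₂ y)
    (hswap : ∀ i j : α, i ≠ j → pairHom ι₁ ι₂ hdisj (Equiv.swap i j) ∈ R) :
    ∀ σ : Perm α, pairHom ι₁ ι₂ hdisj σ ∈ R := by
  intro σ
  have hσ : σ ∈ Subgroup.closure {τ : Perm α | τ.IsSwap} := by
    rw [Equiv.Perm.closure_isSwap]; trivial
  induction hσ using Subgroup.closure_induction with
  | mem τ hτ =>
    obtain ⟨i, j, hij, rfl⟩ := hτ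
    exact hswap i j hij
  | one => rw [map_one]; exact one_mem R
  | mul σ₁ σ₂ _ _ h1 h2 => rw [map_mul]; exact mul_mem h1 h2
  | inv σ₁ _ h1 => rw [map_inv]; exact inv_mem h1

end Embed
section Diag
variable {r : ℕ}

/-- diagonal-block homomorphism -/
def diagHom (r : ℕ) : (Fin r → Perm (Fin 5)) →* Perm (Fin 5 × Fin r) :=
  MonoidHom.mk' (fun x => Equiv.prodCongrLeft (fun j => x j)) (by
    intro x y
    ext p : 1
    show ((x * y) p.2 p.1, p.2) = ((x p.2) ((y p.2) p.1), p.2)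
    simp)

lemma diagHom_apply (x : Fin r → Perm (Fin 5)) (p : Fin 5 × Fin r) :
    diagHom r x p = (x p.2 p.1, p.2) := rfl

lemma diagHom_injective : Function.Injective (diagHom r) := by
  intro x y h
  funext j
  ext c
  have h2 := congrArg (fun σ : Perm (Fin 5 × Fin r) => σ (c, j)) h
  simp only [diagHom_apply] at h2
  exact congrArg Fin.val (congrArg Prod.fst h2)

end Diag

lemma ps_comm (K a b : ℤ) : ps K a b = ps K b a := by
  unfold ps p2
  rw [Equiv.swap_comm (2*a) (2*b), Equiv.swap_comm (K + 2*a) (K + 2*b)]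

section Final
variable (n : ℕ)

/-- The presented group `Γₙ`. -/
abbrev Gamma := PresentedGroup ({⁅FreeGroup.of true, FreeGroup.of false⁆ ^ n} : Set (FreeGroup Bool))

def fgen : Bool → Perm ℤ := fun b => if b then t else v n

lemma hrel (hn : 2 ≤ n) : ∀ r ∈ ({⁅FreeGroup.of true, FreeGroup.of false⁆ ^ n} :
    Set (FreeGroup Bool)), FreeGroup.lift (fgen n) r = 1 := by
  intro r hr
  rcases hr with rfl
  rw [map_pow, map_commutatorElement, FreeGroup.lift_apply_of, FreeGroup.lift_apply_of]
  show (⁅t, v n⁆ : Perm ℤ) ^ n = 1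
  exact w_pow_n n hn

noncomputable def fhom (hn : 2 ≤ n) : Gamma n →* Perm ℤ := PresentedGroup.toGroup (hrel n hn)

lemma t_mem_range (hn : 2 ≤ n) : t ∈ (fhom n hn).range :=
  ⟨PresentedGroup.of true, by rw [fhom, PresentedGroup.toGroup.of]; rfl⟩

lemma v_mem_range (hn : 2 ≤ n) : v n ∈ (fhom n hn).range :=
  ⟨PresentedGroup.of false, by rw [fhom, PresentedGroup.toGroup.of]; rfl⟩

theorem gamma_not_virtually_solvable (hn : 2 ≤ n) :
    ¬ ∃ H : Subgroup (Gamma n), H.FiniteIndex ∧ IsSolvable H := by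
  rintro ⟨H, hfi, hsolv⟩
  haveI : Group.IsSolvable H := hsolv
  -- pass to the normal core
  set N := H.normalCore with hNdef
  haveI hNfi : N.FiniteIndex := by rw [hNdef]; infer_instance
  haveI hNsolv : Group.IsSolvable N :=
    solvable_of_surjective
      (f := (Subgroup.subgroupOfEquivOfLe H.normalCore_le).toMonoidHom)
      (Subgroup.subgroupOfEquivOfLe H.normalCore_le).surjective
  have hNnormal : N.Normal := Subgroup.normalCore_normal H
  -- the permutation representation
  set f := fhom n hn with hfdef
  set R := f.range with hRdef
  have ht : t ∈ R := t_mem_range n hn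
  have hv : v n ∈ R := v_mem_range n hn
  set M : Subgroup R := N.map f.rangeRestrict with hMdef
  haveI hMnormal : M.Normal := hNnormal.map _ f.rangeRestrict_surjective
  haveI hMsolv : Group.IsSolvable M := solvable_of_surjective (f.rangeRestrict.subgroupMap_surjective N)
  have hMdvd : M.index ∣ N.index := N.index_map_dvd f.rangeRestrict_surjective
  have hNne : N.index ≠ 0 := hNfi.index_ne_zero
  haveI hMfi : M.FiniteIndex := ⟨fun h0 => hNne (Nat.eq_zero_of_zero_dvd (h0 ▸ hMdvd))⟩
  set m := N.index with hmdef
  -- block parameters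
  set k : ℕ := 5 * m with hkdef
  have hm1 : 1 ≤ m := Nat.one_le_iff_ne_zero.mpr hNne
  have hk1 : 1 ≤ k := by omega
  have h2 : (2:ℤ) ≤ (n:ℤ) := by exact_mod_cast hn
  have hkz : (1:ℤ) ≤ (k:ℤ) := by exact_mod_cast hk1
  set K : ℤ := 2*(n:ℤ)*(k:ℤ) with hKdef
  have hKbig : 2*(k:ℤ) < K := by rw [hKdef]; nlinarith
  -- the doubled embedding of `Perm (Fin 5 × Fin m)`
  set α := (Fin 5 × Fin m) with hαdef
  have hencinj : ∀ p q : α, (p.1:ℤ) + 5*(p.2:ℤ) = (q.1:ℤ) + 5*(q.2:ℤ) → p = q := by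
    rintro ⟨c, j⟩ ⟨c', j'⟩ h
    dsimp only at h
    have hc : (c:ℕ) < 5 := c.isLt
    have hc' : (c':ℕ) < 5 := c'.isLt
    have : (c:ℕ) = c' ∧ (j:ℕ) = j' := by
      constructor <;> omega
    ext <;> simp [this.1, this.2]
  have hencbound : ∀ p : α, 0 ≤ (p.1:ℤ) + 5*(p.2:ℤ) ∧ (p.1:ℤ) + 5*(p.2:ℤ) ≤ (k:ℤ) - 1 := by
    rintro ⟨c, j⟩
    dsimp only
    have hc : (c:ℕ) < 5 := c.isLt
    have hj : (j:ℕ) < m := j.isLt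
    have hc' : ((c:ℕ):ℤ) < 5 := by exact_mod_cast hc
    have hj' : ((j:ℕ):ℤ) < (m:ℤ) := by exact_mod_cast hj
    have hkm : (k:ℤ) = 5*(m:ℤ) := by rw [hkdef]; push_cast; ring
    constructor <;> omega
  set emb1 : α ↪ ℤ := ⟨fun p => 2 * ((p.1:ℤ) + 5*(p.2:ℤ)),
    fun p q h => hencinj p q (by dsimp only at h; omega)⟩ with hemb1
  set emb2 : α ↪ ℤ := ⟨fun p => K + 2 * ((p.1:ℤ) + 5*(p.2:ℤ)),
    fun p q h => hencinj p q (by dsimp only at h; omega)⟩ with hemb2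
  have hdisj : ∀ p q : α, emb1 p ≠ emb2 q := by
    intro p q h
    have h1 := hencbound p
    have h2 := hencbound q
    change 2 * ((p.1:ℤ) + 5*(p.2:ℤ)) = K + 2 * ((q.1:ℤ) + 5*(q.2:ℤ)) at h
    omega
  set Φ := pairHom emb1 emb2 hdisj with hΦdef
  -- all values of Φ lie in the range R
  have hΦR : ∀ σ : Perm α, Φ σ ∈ R := by
    apply pairHom_range_le
    intro i j hij
    rw [pairHom_swap]
    have hbi := hencbound i
    have hbj := hencbound j
    have hne : (i.1:ℤ) + 5*(i.2:ℤ) ≠ (j.1:ℤ) + 5*(j.2:ℤ) := fun h => hij (hencinj i j h)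
    have key : ∀ a b : ℤ, a < b → 0 ≤ a → b ≤ (k:ℤ) - 1 → ps K a b ∈ R := by
      intro a b hab ha hb
      have := ps_mem (R := R) (n := n) (k := k) hn hk1 ht hv (b - (a+1)).toNat a b
        (by omega) ha (by omega)
      rwa [← hKdef] at this
    rcases lt_or_gt_of_ne hne with hlt | hgt
    · have := key _ _ hlt (hbi.1) (hbj.2)
      exact this
    · have := key _ _ hgt (hbj.1) (hbi.2)
      rw [ps_comm] at this
      exact this
  -- the product of m copies of A₅
  set P := (Fin m → alternatingGroup (Fin 5)) with hPdef
  set inc : P →* (Fin m → Perm (Fin 5)) :=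
    MonoidHom.mk' (fun x j => (x j : Perm (Fin 5))) (fun x y => rfl) with hincdef
  have hincinj : Function.Injective inc := by
    intro x y h
    funext j
    exact Subtype.ext (congrFun h j)
  set J : P →* Perm ℤ := Φ.comp ((diagHom m).comp inc) with hJdef
  have hJinj : Function.Injective J := by
    intro x y h
    simp only [hJdef, MonoidHom.comp_apply] at h
    exact hincinj (diagHom_injective (pairHom_injective emb1 emb2 hdisj h))
  have hJR : ∀ x : P, J x ∈ R := fun x => hΦR _
  set JR : P →* R := J.codRestrict R hJR with hJRdef
  have hJRinj : Function.Injective JR := by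
    intro x y h
    apply hJinj
    exact congrArg Subtype.val h
  -- pull back M
  set Qp : Subgroup P := M.comap JR with hQpdef
  haveI hQpnormal : Qp.Normal := hMnormal.comap JR
  haveI hQpsolv : Group.IsSolvable Qp := by
    have hmem : ∀ x : Qp, JR x.val ∈ M := fun x => x.2
    set ρ : Qp →* M := (JR.comp Qp.subtype).codRestrict M hmem with hρdef
    have hρinj : Function.Injective ρ := by
      intro x y h
      apply Subtype.ext
      apply hJRinj
      exact congrArg Subtype.val h
    exact solvable_of_solvable_injective hρinj
  -- each projection of Qp is trivial
  have hproj : ∀ j : Fin m, Qp.map (Pi.evalMonoidHom _ j) = ⊥ := by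
    intro j
    have hsurj : Function.Surjective (Pi.evalMonoidHom (fun _ : Fin m =>
        (alternatingGroup (Fin 5) : Subgroup (Perm (Fin 5)))) j) :=
      fun y => ⟨Pi.mulSingle j y, by simp⟩
    have hnormal : (Qp.map (Pi.evalMonoidHom _ j)).Normal := hQpnormal.map _ hsurj
    haveI hsolvS : Group.IsSolvable (Qp.map (Pi.evalMonoidHom _ j)) :=
      solvable_of_surjective ((Pi.evalMonoidHom _ j).subgroupMap_surjective Qp)
    rcases hnormal.eq_bot_or_eq_top with hbot | htop
    · exact hbot
    · exfalso
      rw [htop] at hsolvS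
      have hA5solv : Group.IsSolvable (alternatingGroup (Fin 5)) :=
        solvable_of_surjective (f := (Subgroup.topEquiv :
          (⊤ : Subgroup (alternatingGroup (Fin 5))) ≃* _).toMonoidHom) Subgroup.topEquiv.surjective
      have hperm : Group.IsSolvable (Perm (Fin 5)) := by
        apply solvable_of_ker_le_range (alternatingGroup (Fin 5)).subtype Equiv.Perm.sign
        rw [(alternatingGroup (Fin 5)).range_subtype]
        exact le_of_eq rfl
      exact Equiv.Perm.fin_5_not_solvable hperm
  have hQpbot : Qp = ⊥ := by
    rw [eq_bot_iff]
    intro x hx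
    have : ∀ j : Fin m, x j = 1 := by
      intro j
      have hmem : x j ∈ Qp.map (Pi.evalMonoidHom _ j) := ⟨x, hx, rfl⟩
      rw [hproj j] at hmem
      exact hmem
    have : x = 1 := funext this
    simp [this]
  -- the injection of P into the finite quotient R ⧸ M
  set χ : P →* R ⧸ M := (QuotientGroup.mk' M).comp JR with hχdef
  have hχinj : Function.Injective χ := by
    rw [← MonoidHom.ker_eq_bot_iff]
    rw [eq_bot_iff]
    intro x hx
    have hx2 : JR x ∈ M := by
      rw [← QuotientGroup.ker_mk' M]
      exact hx
    have : x ∈ Qp := hx2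
    rw [hQpbot] at this
    exact this
  haveI : Finite (R ⧸ M) := Subgroup.finite_quotient_of_finiteIndex (H := M)
  have hcard : Nat.card P ≤ Nat.card (R ⧸ M) := Nat.card_le_card_of_injective χ hχinj
  have hcardP : Nat.card P = (Nat.card (alternatingGroup (Fin 5)))^m := by
    rw [hPdef, Nat.card_pi]
    simp [Finset.prod_const]
  have hA5card : 2 ≤ Nat.card (alternatingGroup (Fin 5)) := by
    have h : Nontrivial (alternatingGroup (Fin 5)) := inferInstance
    rw [Nat.card_eq_fintype_card]
    exact Fintype.one_lt_card_iff_nontrivial.mpr h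
  have hquot : Nat.card (R ⧸ M) = M.index := rfl
  have hMle : M.index ≤ m := Nat.le_of_dvd (Nat.pos_of_ne_zero hNne) hMdvd
  have hpow : 2^m ≤ Nat.card P := by
    rw [hcardP]
    exact Nat.pow_le_pow_left hA5card m
  have hmlt : m < 2^m := Nat.lt_two_pow_self
  omega

end Final
end GammaNVS


/-- For every `n ≥ 2`, the group `Γₙ = ⟨a, b | [a, b]ⁿ = 1⟩` is not virtually solvable:
no finite-index subgroup of `Γₙ` is solvable. -/
theorem gammaGroup_not_virtually_solvable (n : ℕ) (hn : 2 ≤ n) :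
    ¬ ∃ H : Subgroup (GammaGroup n), H.FiniteIndex ∧ IsSolvable H := by
  exact GammaNVS.gamma_not_virtually_solvable n hn
end

section
/- Let f, g : ℝ → ℝ be the affine maps f(x) = 2x + 3 and g(x) = 3x + 4. Then for every nonzero integer n, each of the maps fⁿ ∘ g, fⁿ ∘ g⁻¹, gⁿ ∘ f, and gⁿ ∘ f⁻¹ has a fixed point in ℝ, but the commutator f ∘ g ∘ f⁻¹ ∘ g⁻¹ is the translation x ↦ x − 2 and hence has no fixed point in ℝ. -/
private lemma nat_two_pow_ne_three (m : ℕ) : (2:ℕ)^m ≠ 3 := by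
  intro h
  rcases m with _ | m
  · simp at h
  · have : 2 ∣ 2^(m+1) := dvd_pow_self 2 (Nat.succ_ne_zero m)
    rw [h] at this
    omega

private lemma two_zpow_ne_three (n : ℤ) : (2:ℝ)^n ≠ 3 := by
  intro h
  rcases n with m | m
  · rw [Int.ofNat_eq_coe, zpow_natCast] at h
    have : ((2^m : ℕ) : ℝ) = ((3:ℕ) : ℝ) := by push_cast; exact h
    exact nat_two_pow_ne_three m (Nat.cast_injective this)
  · have h1 : (2:ℝ)^(Int.negSucc m) ≤ 1 := by
      rw [Int.negSucc_eq]
      rw [zpow_neg]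
      rw [inv_le_one_iff₀]
      right
      exact one_le_zpow₀ one_le_two (by positivity)
    rw [h] at h1; norm_num at h1

private lemma three_zpow_ne_two (n : ℤ) : (3:ℝ)^n ≠ 2 := by
  intro h
  rcases n with m | m
  · rw [Int.ofNat_eq_coe, zpow_natCast] at h
    rcases m with _ | m
    · norm_num at h
    · have : (3:ℝ) ≤ 3^(m+1) := by
        calc (3:ℝ) = 3^1 := (pow_one 3).symm
        _ ≤ 3^(m+1) := pow_le_pow_right₀ (by norm_num) (by omega)
      rw [h] at this; norm_num at this
  · have h1 : (3:ℝ)^(Int.negSucc m) ≤ 1 := by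
      rw [Int.negSucc_eq, zpow_neg, inv_le_one_iff₀]
      right
      exact one_le_zpow₀ (by norm_num) (by positivity)
    rw [h] at h1; norm_num at h1

/-- iterate formula for an affine perm -/
private lemma zpow_affine (f : Equiv.Perm ℝ) (a b c : ℝ) (ha0 : a ≠ 0)
    (hc : b = c * (a - 1)) (hf : ∀ x, f x = a * x + b) :
    ∀ n : ℤ, ∀ x, (f ^ n) x = a ^ n * x + (a ^ n - 1) * c := by
  have hfi : ∀ x, f⁻¹ x = (x - b) / a := by
    intro x
    apply f.injective
    rw [show f (f⁻¹ x) = x from f.apply_symm_apply x, hf]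
    field_simp
    ring
  intro n
  induction n using Int.induction_on with
  | zero => intro x; simp
  | succ k ih =>
      intro x
      have h1 : f ^ ((k:ℤ) + 1) = f ^ (k:ℤ) * f := zpow_add_one f k
      rw [h1]
      have h2 : (f ^ (k:ℤ) * f) x = (f ^ (k:ℤ)) (f x) := rfl
      rw [h2, hf, ih, zpow_add_one₀ ha0, hc]
      ring
  | pred k ih =>
      intro x
      have h1 : f ^ (-(k:ℤ) - 1) = f ^ (-(k:ℤ)) * f⁻¹ := by
        rw [sub_eq_add_neg, zpow_add, zpow_neg_one]
      rw [h1]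
      have h2 : (f ^ (-(k:ℤ)) * f⁻¹) x = (f ^ (-(k:ℤ))) (f⁻¹ x) := rfl
      rw [h2, hfi, ih]
      have h3 : a ^ (-(k:ℤ) - 1) = a ^ (-(k:ℤ)) / a := by
        rw [sub_eq_add_neg, zpow_add₀ ha0, zpow_neg_one]; ring
      rw [h3, hc]
      field_simp
      ring

/-- existence of a fixed point of x ↦ s x + c when s ≠ 1 -/
private lemma affine_fixed (s c : ℝ) (hs : s ≠ 1) : ∃ x : ℝ, s * x + c = x := by
  refine ⟨c / (1 - s), ?_⟩
  have h1 : (1:ℝ) - s ≠ 0 := sub_ne_zero.mpr (Ne.symm hs)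
  field_simp
  ring

/-- For the affine maps `f(x) = 2x + 3` and `g(x) = 3x + 4`: every first-step primitive
element `fⁿ ∘ g`, `fⁿ ∘ g⁻¹`, `gⁿ ∘ f`, `gⁿ ∘ f⁻¹` (for nonzero integers `n`) has a fixed
point in `ℝ`, but the commutator `f ∘ g ∘ f⁻¹ ∘ g⁻¹` is the translation `x ↦ x − 2` and hence
has no fixed point in `ℝ`. -/
theorem affine_example_fixed_points (f g : Equiv.Perm ℝ)
    (hf : ∀ x, f x = 2 * x + 3) (hg : ∀ x, g x = 3 * x + 4) :
    (∀ n : ℤ, n ≠ 0 →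
      (∃ x : ℝ, (f ^ n * g) x = x) ∧ (∃ x : ℝ, (f ^ n * g⁻¹) x = x) ∧
      (∃ x : ℝ, (g ^ n * f) x = x) ∧ (∃ x : ℝ, (g ^ n * f⁻¹) x = x)) ∧
    (∀ x : ℝ, (f * g * f⁻¹ * g⁻¹) x = x - 2) ∧
    (∀ x : ℝ, (f * g * f⁻¹ * g⁻¹) x ≠ x) := by
  have hfi : ∀ x, f⁻¹ x = (x - 3) / 2 := by
    intro x
    apply f.injective
    rw [show f (f⁻¹ x) = x from f.apply_symm_apply x, hf]
    ring
  have hgi : ∀ x, g⁻¹ x = (x - 4) / 3 := by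
    intro x
    apply g.injective
    rw [show g (g⁻¹ x) = x from g.apply_symm_apply x, hg]
    ring
  have hfz := zpow_affine f 2 3 3 (by norm_num) (by norm_num) hf
  have hgz := zpow_affine g 3 4 2 (by norm_num) (by norm_num) hg
  have hcomm : ∀ x : ℝ, (f * g * f⁻¹ * g⁻¹) x = x - 2 := by
    intro x
    have : (f * g * f⁻¹ * g⁻¹) x = f (g (f⁻¹ (g⁻¹ x))) := rfl
    rw [this, hgi, hfi, hg, hf]
    ring
  refine ⟨?_, hcomm, fun x hx => by rw [hcomm x] at hx; linarith⟩
  intro n _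
  have h2pos : (0:ℝ) < 2 ^ n := zpow_pos (by norm_num) n
  have h3pos : (0:ℝ) < 3 ^ n := zpow_pos (by norm_num) n
  refine ⟨?_, ?_, ?_, ?_⟩
  · -- f^n ∘ g : slope 2^n * 3, need ≠ 1 i.e. 2^(-n) ≠ 3
    have hs : (2:ℝ)^n * 3 ≠ 1 := by
      intro h
      apply two_zpow_ne_three (-n)
      rw [zpow_neg]
      field_simp
      linarith
    obtain ⟨x, hx⟩ := affine_fixed ((2:ℝ)^n * 3) ((2:ℝ)^n * 4 + ((2:ℝ)^n - 1) * 3) hs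
    refine ⟨x, ?_⟩
    have : (f ^ n * g) x = (f ^ n) (g x) := rfl
    rw [this, hg, hfz]
    linarith [hx]
  · -- f^n ∘ g⁻¹ : slope 2^n / 3, need ≠ 1 i.e. 2^n ≠ 3
    have hs : (2:ℝ)^n * (1/3) ≠ 1 := by
      intro h
      apply two_zpow_ne_three n
      linarith
    obtain ⟨x, hx⟩ := affine_fixed ((2:ℝ)^n * (1/3)) ((2:ℝ)^n * (-4/3) + ((2:ℝ)^n - 1) * 3) hs
    refine ⟨x, ?_⟩
    have h0 : (f ^ n * g⁻¹) x = (f ^ n) (g⁻¹ x) := rfl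
    have heq : (2:ℝ)^n * ((x-4)/3) + ((2:ℝ)^n - 1)*3
        = (2:ℝ)^n*(1/3)*x + ((2:ℝ)^n*(-4/3)+((2:ℝ)^n-1)*3) := by ring
    rw [h0, hgi, hfz, heq, hx]
  · -- g^n ∘ f : slope 3^n * 2, need 3^(-n) ≠ 2
    have hs : (3:ℝ)^n * 2 ≠ 1 := by
      intro h
      apply three_zpow_ne_two (-n)
      rw [zpow_neg]
      field_simp
      linarith
    obtain ⟨x, hx⟩ := affine_fixed ((3:ℝ)^n * 2) ((3:ℝ)^n * 3 + ((3:ℝ)^n - 1) * 2) hs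
    refine ⟨x, ?_⟩
    have : (g ^ n * f) x = (g ^ n) (f x) := rfl
    rw [this, hf, hgz]
    linarith [hx]
  · -- g^n ∘ f⁻¹ : slope 3^n / 2, need 3^n ≠ 2
    have hs : (3:ℝ)^n * (1/2) ≠ 1 := by
      intro h
      apply three_zpow_ne_two n
      linarith
    obtain ⟨x, hx⟩ := affine_fixed ((3:ℝ)^n * (1/2)) ((3:ℝ)^n * (-3/2) + ((3:ℝ)^n - 1) * 2) hs
    refine ⟨x, ?_⟩
    have h0 : (g ^ n * f⁻¹) x = (g ^ n) (f⁻¹ x) := rfl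
    have heq : (3:ℝ)^n * ((x-3)/2) + ((3:ℝ)^n - 1)*2
        = (3:ℝ)^n*(1/2)*x + ((3:ℝ)^n*(-3/2)+((3:ℝ)^n-1)*2) := by ring
    rw [h0, hfi, hgz, heq, hx]
end

section
/- Let θ, η ∈ ℝ and λ ∈ ℝ with λ ≠ 0. Let A = [[cos θ, sin θ], [−sin θ, cos θ]], D = [[λ, 0], [0, λ⁻¹]], R = [[cos η, sin η], [−sin η, cos η]], and B' = D · R · D⁻¹, all 2×2 real matrices. Then for all integers n and k, trace(Aⁿ · B'ᵏ) = 2·cos(nθ)·cos(kη) − (λ² + λ⁻²)·sin(nθ)·sin(kη) = 2·cos(nθ − kη) − (λ + λ⁻¹)²·sin(nθ)·sin(kη). -/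
open Real Matrix

lemma rot_mul (a b : ℝ) :
    (!![cos a, sin a; -sin a, cos a] : Matrix (Fin 2) (Fin 2) ℝ) *
      !![cos b, sin b; -sin b, cos b] = !![cos (a+b), sin (a+b); -sin (a+b), cos (a+b)] := by
  ext i j
  fin_cases i <;> fin_cases j <;>
    simp [Matrix.mul_apply, Fin.sum_univ_two, cos_add, sin_add] <;> ring

lemma rot_inv (a : ℝ) :
    (!![cos a, sin a; -sin a, cos a] : Matrix (Fin 2) (Fin 2) ℝ)⁻¹ =
      !![cos (-a), sin (-a); -sin (-a), cos (-a)] := by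
  apply Matrix.inv_eq_right_inv
  rw [rot_mul]
  simp [Matrix.one_fin_two]

lemma rot_zpow (a : ℝ) (A : GL (Fin 2) ℝ)
    (hA : (A : Matrix (Fin 2) (Fin 2) ℝ) = !![cos a, sin a; -sin a, cos a]) (n : ℤ) :
    ((A ^ n : GL (Fin 2) ℝ) : Matrix (Fin 2) (Fin 2) ℝ)
      = !![cos (n*a), sin (n*a); -sin (n*a), cos (n*a)] := by
  induction n using Int.induction_on with
  | zero => simp [Matrix.one_fin_two]
  | succ m ih =>
      rw [_root_.zpow_add_one, Units.val_mul, ih, hA, rot_mul]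
      push_cast; ring_nf
  | pred m ih =>
      rw [_root_.zpow_sub_one, Units.val_mul, ih, Matrix.coe_units_inv, hA, rot_inv, rot_mul]
      push_cast; ring_nf

/-- For `A` the rotation matrix of angle `θ`, `D = diag(λ, λ⁻¹)`, `R` the rotation matrix of
angle `η` and `B' = D·R·D⁻¹`, one has for all integers `n`, `k`:
`trace(Aⁿ·B'ᵏ) = 2·cos(nθ)·cos(kη) − (λ² + λ⁻²)·sin(nθ)·sin(kη)
             = 2·cos(nθ − kη) − (λ + λ⁻¹)²·sin(nθ)·sin(kη)`. -/
theorem trace_rotation_conj_pow (θ η l : ℝ) (hl : l ≠ 0)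
    (A D R : GL (Fin 2) ℝ)
    (hA : (A : Matrix (Fin 2) (Fin 2) ℝ) = !![cos θ, sin θ; -sin θ, cos θ])
    (hD : (D : Matrix (Fin 2) (Fin 2) ℝ) = !![l, 0; 0, l⁻¹])
    (hR : (R : Matrix (Fin 2) (Fin 2) ℝ) = !![cos η, sin η; -sin η, cos η]) :
    ∀ n k : ℤ,
      Matrix.trace ((A ^ n * (D * R * D⁻¹) ^ k : GL (Fin 2) ℝ) : Matrix (Fin 2) (Fin 2) ℝ)
          = 2 * cos (n * θ) * cos (k * η) - (l ^ 2 + l⁻¹ ^ 2) * sin (n * θ) * sin (k * η) ∧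
      Matrix.trace ((A ^ n * (D * R * D⁻¹) ^ k : GL (Fin 2) ℝ) : Matrix (Fin 2) (Fin 2) ℝ)
          = 2 * cos (n * θ - k * η) - (l + l⁻¹) ^ 2 * sin (n * θ) * sin (k * η) := by
  intro n k
  have hconj : (D * R * D⁻¹) ^ k = D * R ^ k * D⁻¹ := by group; simp [_root_.zpow_neg_one]
  have hDinv : ((D⁻¹ : GL (Fin 2) ℝ) : Matrix (Fin 2) (Fin 2) ℝ) = !![l⁻¹, 0; 0, l] := by
    rw [Matrix.coe_units_inv, hD]
    apply Matrix.inv_eq_right_inv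
    ext i j
    fin_cases i <;> fin_cases j <;>
      simp [Matrix.mul_apply, Fin.sum_univ_two, hl, Matrix.one_fin_two,
        mul_inv_cancel₀, inv_mul_cancel₀]
  have key : Matrix.trace ((A ^ n * (D * R * D⁻¹) ^ k : GL (Fin 2) ℝ) : Matrix (Fin 2) (Fin 2) ℝ)
      = 2 * cos (n * θ) * cos (k * η) - (l ^ 2 + l⁻¹ ^ 2) * sin (n * θ) * sin (k * η) := by
    rw [hconj, Units.val_mul, Units.val_mul, Units.val_mul, rot_zpow θ A hA,
      rot_zpow η R hR, hD, hDinv]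
    simp [Matrix.trace_fin_two, Matrix.mul_apply, Fin.sum_univ_two]
    field_simp
    ring
  refine ⟨key, key.trans ?_⟩
  have expand : (l + l⁻¹) ^ 2 = l ^ 2 + l⁻¹ ^ 2 + 2 := by
    field_simp
    ring
  rw [expand, cos_sub]
  ring
end

section
/- Let θ, η ∈ ℝ with θ/π irrational and sin η ≠ 0, and let c > 4. Then there exists an integer n such that 2·cos(nθ − η) − c·sin(nθ)·sin(η) < −2. -/
open Real

/-- If `θ/π` is irrational, `sin η ≠ 0` and `c > 4`, then there is an integer `n` with
`2·cos(nθ − η) − c·sin(nθ)·sin(η) < −2`. -/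
theorem exists_int_trace_lt_neg_two (θ η c : ℝ)
    (hθ : Irrational (θ / π)) (hη : sin η ≠ 0) (hc : 4 < c) :
    ∃ n : ℤ, 2 * cos (n * θ - η) - c * sin (n * θ) * sin η < -2 := by
  -- the function f x = A cos x + B sin x
  set A : ℝ := 2 * cos η with hA
  set B : ℝ := (2 - c) * sin η with hB
  set f : ℝ → ℝ := fun x => A * cos x + B * sin x with hf
  have hfeq : ∀ x : ℝ, 2 * cos (x - η) - c * sin x * sin η = f x := by
    intro x
    simp only [hf, hA, hB, Real.cos_sub]
    ring
  -- minimum value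
  set R : ℝ := Real.sqrt (A ^ 2 + B ^ 2) with hR
  have hsin2 : 0 < sin η ^ 2 := by positivity
  have hR2 : R ^ 2 = A ^ 2 + B ^ 2 := Real.sq_sqrt (by positivity)
  have hR2gt : 4 < R ^ 2 := by
    rw [hR2, hA, hB]
    have h1 : (0:ℝ) < ((2 - c) ^ 2 - 4) * sin η ^ 2 :=
      mul_pos (by nlinarith) hsin2
    nlinarith [Real.sin_sq_add_cos_sq η, h1]
  have hRgt : 2 < R := by
    nlinarith [Real.sqrt_nonneg (A ^ 2 + B ^ 2)]
  have hRpos : 0 < R := by linarith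
  -- a point where f attains -R
  set z : Complex := Complex.mk (-A) (-B) with hz
  have hzne : z ≠ 0 := by
    intro h
    have : -B = 0 := by rw [h] at hz; exact (Complex.ext_iff.mp hz.symm).2
    have hB0 : B = 0 := by linarith
    rw [hB] at hB0
    rcases mul_eq_zero.mp hB0 with h1 | h1
    · linarith
    · exact hη h1
  have habs : ‖z‖ = R := by
    rw [Complex.norm_def, Complex.normSq_mk, hR]
    congr 1
    ring
  set x₀ : ℝ := Complex.arg z with hx₀
  have hcos : cos x₀ = -A / R := by rw [hx₀, Complex.cos_arg hzne, habs]
  have hsin : sin x₀ = -B / R := by rw [hx₀, Complex.sin_arg, habs]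
  have hfx₀ : f x₀ = -R := by
    rw [hf]
    simp only [hcos, hsin]
    field_simp
    nlinarith [hR2]
  -- f x₀ < -2
  have hlt : f x₀ < -2 := by rw [hfx₀]; linarith
  -- continuity: an open ball around x₀ where f < -2
  have hcont : Continuous f := by
    apply Continuous.add <;> fun_prop
  have hopen : IsOpen {x : ℝ | f x < -2} := isOpen_lt hcont continuous_const
  obtain ⟨ε, hε, hball⟩ := Metric.isOpen_iff.mp hopen x₀ hlt
  -- density of the subgroup generated by θ and 2π
  set S : AddSubgroup ℝ := AddSubgroup.closure {θ, 2 * π}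
  have hdense : Dense (S : Set ℝ) := by
    rcases S.dense_or_cyclic with h | ⟨a, ha⟩
    · exact h
    · exfalso
      have hθS : θ ∈ S := AddSubgroup.subset_closure (by simp)
      have h2πS : 2 * π ∈ S := AddSubgroup.subset_closure (by simp)
      rw [ha] at hθS h2πS
      obtain ⟨m, hm⟩ := AddSubgroup.mem_closure_singleton.mp hθS
      obtain ⟨k, hk⟩ := AddSubgroup.mem_closure_singleton.mp h2πS
      have hπ : (0:ℝ) < π := Real.pi_pos
      have hka : (k : ℝ) * a = 2 * π := by rw [← hk, zsmul_eq_mul]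
      have hma : (m : ℝ) * a = θ := by rw [← hm, zsmul_eq_mul]
      have hk0 : (k : ℝ) ≠ 0 := by
        intro h
        rw [h, zero_mul] at hka; linarith
      have hmain : θ * k = 2 * m * π := by
        rw [← hma, show (m:ℝ) * a * k = (m:ℝ) * ((k:ℝ) * a) by ring, hka]
        ring
      have : θ / π = 2 * m / k := by
        field_simp
        linarith [hmain]
      exact hθ ⟨2 * m / k, by push_cast [this]; ring⟩
  -- find an element of S close to x₀
  obtain ⟨y, hy, hyS⟩ := Metric.dense_iff.mp hdense x₀ ε hε
  obtain ⟨n, m, hnm⟩ := AddSubgroup.mem_closure_pair.mp hyS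
  refine ⟨n, ?_⟩
  rw [hfeq]
  have hy' : (n : ℝ) * θ + m * (2 * π) ∈ Metric.ball x₀ ε := by
    have : (n : ℝ) * θ + m * (2 * π) = y := by
      rw [← hnm]; push_cast [zsmul_eq_mul]; ring
    rwa [this]
  have := hball hy'
  have hper : f ((n : ℝ) * θ) = f ((n : ℝ) * θ + m * (2 * π)) := by
    simp only [hf]
    rw [show (n:ℝ) * θ + m * (2*π) = (n:ℝ)*θ + m * (2*π) from rfl,
      Real.cos_add_int_mul_two_pi, Real.sin_add_int_mul_two_pi]
  rw [hper]
  exact this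
end

section
/- Let θ, η ∈ ℝ with θ/π irrational and sin η ≠ 0, and let λ > 0 with λ ≠ 1. Let A = [[cos θ, sin θ], [−sin θ, cos θ]] and B' = D · [[cos η, sin η], [−sin η, cos η]] · D⁻¹ where D = [[λ, 0], [0, λ⁻¹]], regarded as elements of SL(2, ℝ). Then there exists an integer n with trace(Aⁿ · B') < −2; in particular Aⁿ · B' has no fixed point in the upper half-plane ℍ under the Möbius action of SL(2, ℝ). -/
open Real Matrix
open scoped MatrixGroups UpperHalfPlane

private lemma rot_coe_zpow (θ : ℝ) (A : SL(2, ℝ))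
    (hA : (A : Matrix (Fin 2) (Fin 2) ℝ) = !![cos θ, sin θ; -sin θ, cos θ]) (n : ℤ) :
    ((A ^ n : SL(2, ℝ)) : Matrix (Fin 2) (Fin 2) ℝ) =
      !![cos (n * θ), sin (n * θ); -sin (n * θ), cos (n * θ)] := by
  have hnat : ∀ m : ℕ, ((A ^ m : SL(2, ℝ)) : Matrix (Fin 2) (Fin 2) ℝ) =
      !![cos (m * θ), sin (m * θ); -sin (m * θ), cos (m * θ)] := by
    intro m
    induction m with
    | zero => simp [Matrix.one_fin_two]
    | succ k ih =>
      have h0 : (A ^ (k + 1) : SL(2, ℝ)) = A ^ k * A := by rw [pow_succ]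
      rw [h0, Matrix.SpecialLinearGroup.coe_mul, ih, hA]
      have h1 : ((k + 1 : ℕ) : ℝ) * θ = (k : ℝ) * θ + θ := by push_cast; ring
      rw [h1, cos_add, sin_add]
      ext i j
      fin_cases i <;> fin_cases j <;> simp [Matrix.mul_apply, Fin.sum_univ_two] <;> ring
  rcases le_or_gt 0 n with hn | hn
  · lift n to ℕ using hn
    rw [zpow_natCast]
    exact_mod_cast hnat n
  · have h1 : A ^ n = (A ^ (-n).toNat)⁻¹ := by
      rw [← zpow_natCast, Int.toNat_of_nonneg (by omega), ← _root_.zpow_neg, neg_neg]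
    rw [h1, Matrix.SpecialLinearGroup.coe_inv, hnat, Matrix.adjugate_fin_two]
    have h2 : ((((-n).toNat : ℕ)) : ℝ) = -(n : ℝ) := by
      have h3 : (((-n).toNat : ℕ) : ℤ) = -n := Int.toNat_of_nonneg (by omega)
      exact_mod_cast congrArg (Int.cast : ℤ → ℝ) h3
    rw [h2]
    ext i j
    fin_cases i <;> fin_cases j <;>
      simp [show -(n:ℝ) * θ = -((n:ℝ) * θ) by ring, cos_neg, sin_neg]

private lemma exists_cos_sin (x y : ℝ) (h : x ^ 2 + y ^ 2 = 1) :
    ∃ t : ℝ, cos t = x ∧ sin t = y := by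
  have hx1 : -1 ≤ x := by nlinarith
  have hx2 : x ≤ 1 := by nlinarith
  have hs : sin (arccos x) = √(1 - x ^ 2) := sin_arccos x
  have hy2 : 1 - x ^ 2 = y ^ 2 := by linarith
  rcases le_or_gt 0 y with hy | hy
  · exact ⟨arccos x, cos_arccos hx1 hx2, by rw [hs, hy2, Real.sqrt_sq hy]⟩
  · exact ⟨-arccos x, by rw [cos_neg]; exact cos_arccos hx1 hx2, by
      rw [sin_neg, hs, hy2, Real.sqrt_sq_eq_abs, abs_of_neg hy, neg_neg]⟩

private lemma dense_subgroup {θ : ℝ} (hθ : Irrational (θ / π)) :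
    Dense ((AddSubgroup.closure {θ, 2 * π} : AddSubgroup ℝ) : Set ℝ) := by
  rcases (AddSubgroup.closure {θ, 2 * π}).dense_or_cyclic with h | ⟨a, ha⟩
  · exact h
  · exfalso
    have hθm : θ ∈ AddSubgroup.closure ({θ, 2 * π} : Set ℝ) :=
      AddSubgroup.subset_closure (by simp)
    have hπm : 2 * π ∈ AddSubgroup.closure ({θ, 2 * π} : Set ℝ) :=
      AddSubgroup.subset_closure (by simp)
    rw [ha] at hθm hπm
    obtain ⟨n, hn⟩ := AddSubgroup.mem_closure_singleton.mp hθm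
    obtain ⟨m, hm⟩ := AddSubgroup.mem_closure_singleton.mp hπm
    have hπ : (0:ℝ) < π := Real.pi_pos
    simp only [zsmul_eq_mul] at hn hm
    have hm0 : (m : ℝ) ≠ 0 := by
      rintro h0
      rw [h0, zero_mul] at hm
      linarith
    exact hθ ⟨(2 * n / m : ℚ), by
      push_cast
      rw [div_eq_div_iff (by exact_mod_cast hm0) (ne_of_gt hπ)]
      linear_combination (m : ℝ) * hn - (n : ℝ) * hm⟩

set_option maxHeartbeats 1600000 in
/-- For `A` the rotation by `θ` and `B' = D·R·D⁻¹` in `SL(2, ℝ)`, where `R` is the rotation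
by `η` and `D = diag(λ, λ⁻¹)`, with `θ/π` irrational, `sin η ≠ 0`, `λ > 0`, `λ ≠ 1`:
there is an integer `n` with `trace(Aⁿ·B') < −2`; in particular `Aⁿ·B'` has no fixed point in
the upper half-plane `ℍ` under the Möbius action of `SL(2, ℝ)`. -/
theorem exists_pow_mul_trace_lt_neg_two (θ η l : ℝ)
    (hθ : Irrational (θ / π)) (hη : sin η ≠ 0) (hl : 0 < l) (hl1 : l ≠ 1)
    (A D R : SL(2, ℝ))
    (hA : (A : Matrix (Fin 2) (Fin 2) ℝ) = !![cos θ, sin θ; -sin θ, cos θ])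
    (hD : (D : Matrix (Fin 2) (Fin 2) ℝ) = !![l, 0; 0, l⁻¹])
    (hR : (R : Matrix (Fin 2) (Fin 2) ℝ) = !![cos η, sin η; -sin η, cos η]) :
    ∃ n : ℤ,
      Matrix.trace ((A ^ n * (D * R * D⁻¹) : SL(2, ℝ)) : Matrix (Fin 2) (Fin 2) ℝ) < -2 ∧
      ∀ z : ℍ, (A ^ n * (D * R * D⁻¹)) • z ≠ z := by
  have hπ : (0:ℝ) < π := Real.pi_pos
  have hl0 : l ≠ 0 := ne_of_gt hl
  have hll : l * l⁻¹ = 1 := mul_inv_cancel₀ hl0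
  set c : ℝ := l ^ 2 + l⁻¹ ^ 2 with hcdef
  have hc2 : 2 < c := by
    have h2 : l - l⁻¹ ≠ 0 := by
      intro h
      have h3 : l = l⁻¹ := by linarith
      have h4 : l * l = 1 := by
        nth_rewrite 2 [h3]
        exact hll
      rcases mul_self_eq_one_iff.mp h4 with h5 | h5
      · exact hl1 h5
      · linarith
    rw [hcdef]
    nlinarith [sq_pos_of_ne_zero h2, hll]
  -- B' matrix
  have hB : ((D * R * D⁻¹ : SL(2,ℝ)) : Matrix (Fin 2) (Fin 2) ℝ) =
      !![cos η, l ^ 2 * sin η; -(l⁻¹ ^ 2 * sin η), cos η] := by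
    rw [Matrix.SpecialLinearGroup.coe_mul, Matrix.SpecialLinearGroup.coe_mul,
      Matrix.SpecialLinearGroup.coe_inv, hD, hR, Matrix.adjugate_fin_two]
    ext i j
    fin_cases i <;> fin_cases j <;>
      simp [Matrix.mul_apply, Fin.sum_univ_two] <;>
      first
        | ring1
        | exact Or.inl trivial
        | tauto
        | linear_combination cos η * hll
        | linear_combination sin η * hll
        | linear_combination (-(sin η)) * hll
        | (field_simp; ring)
  set f : ℝ → ℝ := fun t => 2 * cos η * cos t - c * sin η * sin t with hfdef
  -- trace formula
  have htr : ∀ n : ℤ,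
      Matrix.trace ((A ^ n * (D * R * D⁻¹) : SL(2,ℝ)) : Matrix (Fin 2) (Fin 2) ℝ)
        = f (n * θ) := by
    intro n
    rw [Matrix.SpecialLinearGroup.coe_mul, rot_coe_zpow θ A hA n, hB,
      Matrix.trace_fin_two]
    simp [Matrix.mul_apply, Fin.sum_univ_two, hfdef]
    ring
  -- amplitude
  set a₀ : ℝ := 2 * cos η with ha₀
  set b₀ : ℝ := -(c * sin η) with hb₀
  have hr4 : 4 < a₀ ^ 2 + b₀ ^ 2 := by
    have h1 := sin_sq_add_cos_sq η
    have h2 : 0 < sin η ^ 2 := by positivity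
    rw [ha₀, hb₀]
    have h3 : 0 < (c ^ 2 - 4) * sin η ^ 2 := mul_pos (by nlinarith) h2
    nlinarith [h1, h3]
  set r : ℝ := √(a₀ ^ 2 + b₀ ^ 2) with hrdef
  have hr2 : 2 < r := by
    rw [hrdef]
    have : (2:ℝ) = √4 := by rw [show (4:ℝ) = 2^2 by norm_num, Real.sqrt_sq]; norm_num
    rw [this]
    exact Real.sqrt_lt_sqrt (by norm_num) hr4
  have hrpos : 0 < r := by linarith
  have hrsq : r ^ 2 = a₀ ^ 2 + b₀ ^ 2 := Real.sq_sqrt (by positivity)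
  -- a point where f is < -2
  obtain ⟨t, hct, hst⟩ := exists_cos_sin (-a₀ / r) (-b₀ / r) (by
    field_simp
    first
      | linear_combination hrsq
      | linear_combination -hrsq)
  have hft : f t < -2 := by
    have : f t = -r := by
      rw [hfdef]
      simp only
      rw [hct, hst]
      have hr0 : r ≠ 0 := ne_of_gt hrpos
      field_simp
      first
        | linear_combination hrsq
        | linear_combination -hrsq
        | linear_combination r * hrsq
        | linear_combination (-r) * hrsq
    rw [this]
    linarith
  -- find n via density
  have hUopen : IsOpen (f ⁻¹' Set.Iio (-2)) := by
    apply IsOpen.preimage _ isOpen_Iio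
    rw [hfdef]; continuity
  obtain ⟨x, hxS, hxU⟩ := (dense_subgroup hθ).exists_mem_open hUopen ⟨t, hft⟩
  obtain ⟨m, k, hmk⟩ := AddSubgroup.mem_closure_pair.mp hxS
  have hfx : f ((m : ℝ) * θ) < -2 := by
    have hx : x = (m : ℝ) * θ + (k : ℝ) * (2 * π) := by
      rw [← hmk]; push_cast [zsmul_eq_mul]; ring
    have : f x = f ((m : ℝ) * θ) := by
      rw [hx, hfdef]
      simp only
      rw [Real.cos_add_int_mul_two_pi, Real.sin_add_int_mul_two_pi]
    rw [← this]
    exact hxU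
  refine ⟨m, by rw [htr m]; exact hfx, ?_⟩
  -- no fixed point
  intro z hz
  set g : SL(2,ℝ) := A ^ m * (D * R * D⁻¹) with hgdef
  have htrg : (g : Matrix (Fin 2) (Fin 2) ℝ) 0 0 + (g : Matrix (Fin 2) (Fin 2) ℝ) 1 1 < -2 := by
    have := htr m
    rw [Matrix.trace_fin_two] at this
    rw [hgdef]
    rw [this]
    exact hfx
  set a : ℝ := (g : Matrix (Fin 2) (Fin 2) ℝ) 0 0 with hadef
  set b : ℝ := (g : Matrix (Fin 2) (Fin 2) ℝ) 0 1 with hbdef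
  set cc : ℝ := (g : Matrix (Fin 2) (Fin 2) ℝ) 1 0 with hccdef
  set d : ℝ := (g : Matrix (Fin 2) (Fin 2) ℝ) 1 1 with hddef
  have hdet : a * d - b * cc = 1 := by
    have := g.property
    rw [Matrix.det_fin_two] at this
    linarith [this]
  have hcd : ![cc, d] ≠ 0 := by
    intro h0
    have h1 : cc = 0 := congrFun h0 0
    have h2 : d = 0 := congrFun h0 1
    rw [h1, h2] at hdet
    norm_num at hdet
  have hden : (cc : ℂ) * z + d ≠ 0 := by
    have := UpperHalfPlane.linear_ne_zero (cd := ![cc, d]) z hcd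
    simpa using this
  rw [UpperHalfPlane.specialLinearGroup_apply] at hz
  have hz' : ((a : ℂ) * z + b) / ((cc : ℂ) * z + d) = (z : ℂ) := by
    have := congrArg (UpperHalfPlane.coe) hz
    simpa [UpperHalfPlane.coe_mk] using this
  have hq : (cc : ℂ) * (z : ℂ) ^ 2 + ((d : ℂ) - a) * z - b = 0 := by
    have h1 : (a : ℂ) * z + b = (z : ℂ) * ((cc : ℂ) * z + d) := by
      rw [div_eq_iff hden] at hz'
      linear_combination hz'
    linear_combination -h1
  have hYpos : 0 < z.im := z.im_pos
  have him := congrArg Complex.im hq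
  have hre := congrArg Complex.re hq
  simp [pow_two, Complex.add_im, Complex.add_re, Complex.sub_im, Complex.sub_re,
    Complex.mul_im, Complex.mul_re] at him hre
  -- derive the two real equations
  have e1 : 2 * cc * z.re + (d - a) = 0 := by
    have h2 : z.im * (2 * cc * z.re + (d - a)) = 0 := by linear_combination him
    rcases mul_eq_zero.mp h2 with h | h
    · exact absurd h (ne_of_gt hYpos)
    · exact h
  have hb2 : b + cc * (z.re ^ 2 + z.im ^ 2) = 0 := by
    linear_combination (-1) * hre + z.re * e1
  have key : (a - cc * z.re) ^ 2 + (cc * z.im) ^ 2 = 1 := by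
    linear_combination hdet - a * e1 + cc * hb2
  have h5 : a - cc * z.re < -1 := by linarith
  have h6 : 1 < (a - cc * z.re) ^ 2 := by nlinarith [h5]
  nlinarith [key, h6, sq_nonneg (cc * z.im)]
end

section
/- Let G be a subgroup of SL(2, ℝ) that is not abelian (there exist A, B ∈ G with AB ≠ BA). Then G contains an element that acts freely on the upper half-plane: there exists g ∈ G such that g · z ≠ z for every z ∈ ℍ. -/
open scoped MatrixGroups UpperHalfPlane
open Matrix

lemma acts_freely (g : SL(2, ℝ)) (htr : 4 ≤ (g 0 0 + g 1 1)^2)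
    (hng : ¬ (g 0 1 = 0 ∧ g 1 0 = 0 ∧ g 0 0 = g 1 1)) : ∀ z : ℍ, g • z ≠ z := by
  intro z heq
  have hc := congrArg (UpperHalfPlane.coe) heq
  rw [UpperHalfPlane.specialLinearGroup_apply] at hc
  simp only [UpperHalfPlane.coe_mk, Algebra.algebraMap_self_apply] at hc
  have hdet := g.2
  rw [Matrix.det_fin_two] at hdet
  set a := g 0 0 with ha
  set b := g 0 1 with hb
  set c := g 1 0 with hcc
  set d := g 1 1 with hd
  have him : 0 < (z : ℂ).im := z.2
  by_cases hden : ((c : ℂ) * z + d) = 0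
  · rw [hden, div_zero] at hc
    rw [← hc] at him
    simp at him
  · rw [div_eq_iff hden] at hc
    have hIm := congrArg Complex.im hc
    have hRe := congrArg Complex.re hc
    simp only [Complex.add_im, Complex.add_re, Complex.mul_im, Complex.mul_re,
      Complex.ofReal_re, Complex.ofReal_im, zero_mul, mul_zero, add_zero, sub_zero,
      zero_add] at hIm hRe
    set x := (z : ℂ).re with hx
    set y := (z : ℂ).im with hy
    by_cases hc0 : c = 0
    · apply hng
      rw [hc0] at hIm hRe
      have had : a = d := by
        have h0 : (a - d) * y = 0 := by linarith [hIm]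
        rcases mul_eq_zero.mp h0 with h1 | h2
        · linarith
        · linarith
      refine ⟨by linear_combination hRe - x * had, hc0, had⟩
    · have h1 : a - d = 2*c*x := by
        have h0 : (a - d - 2*c*x) * y = 0 := by linarith [hIm]
        rcases mul_eq_zero.mp h0 with h1 | h2
        · linarith
        · linarith
      have h2 : b = -c*x^2 - c*y^2 := by linear_combination hRe - x * h1
      have h3 : (a+d)^2 - 4 = -4*(c*y)^2 := by
        linear_combination (a - d + 2*c*x)*h1 + 4*c*h2 + 4*hdet
      nlinarith [h3, htr, mul_pos (mul_pos him him) (mul_self_pos.mpr hc0)]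

set_option maxHeartbeats 1000000 in
/-- In a non-abelian subgroup `G` of `SL(2, ℝ)`, there always exists an element acting freely
on the upper half-plane `ℍ` under the Möbius action. -/
theorem exists_freely_acting_of_not_abelian (G : Subgroup SL(2, ℝ))
    (h : ∃ A ∈ G, ∃ B ∈ G, A * B ≠ B * A) :
    ∃ g ∈ G, ∀ z : ℍ, g • z ≠ z := by
  obtain ⟨A, hA, B, hB, hAB⟩ := h
  have hdA : (A 0 0 : ℝ)*(A 1 1 : ℝ) - (A 0 1 : ℝ)*(A 1 0 : ℝ) = 1 := by
    have := A.2; rw [Matrix.det_fin_two] at this; exact this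
  have hdB : (B 0 0 : ℝ)*(B 1 1 : ℝ) - (B 0 1 : ℝ)*(B 1 0 : ℝ) = 1 := by
    have := B.2; rw [Matrix.det_fin_two] at this; exact this
  by_cases htr : 4 ≤ ((A 0 0 : ℝ) + (A 1 1 : ℝ))^2
  · refine ⟨A, hA, acts_freely A htr ?_⟩
    rintro ⟨hb0, hc0, had⟩
    apply hAB
    ext i j
    fin_cases i <;> fin_cases j <;>
      simp only [Matrix.SpecialLinearGroup.coe_mul, Matrix.mul_apply, Fin.sum_univ_two,
        Fin.isValue, Fin.mk_zero, Fin.mk_one] <;>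
      first
        | linear_combination (B 1 0 : ℝ)*hb0 - (B 0 1 : ℝ)*hc0
        | linear_combination (B 0 1 : ℝ)*had + ((B 1 1 : ℝ) - (B 0 0 : ℝ))*hb0
        | linear_combination ((B 0 0 : ℝ) - (B 1 1 : ℝ))*hc0 - (B 1 0 : ℝ)*had
        | linear_combination (B 0 1 : ℝ)*hc0 - (B 1 0 : ℝ)*hb0
  · push_neg at htr
    set C : SL(2,ℝ) := A*B*A⁻¹*B⁻¹ with hCdef
    have hMne : ¬ (((A 0 1 : ℝ)*(B 1 0 : ℝ) - (A 1 0 : ℝ)*(B 0 1 : ℝ) = 0) ∧ ((B 0 1 : ℝ)*((A 0 0 : ℝ)-(A 1 1 : ℝ)) + (A 0 1 : ℝ)*((B 1 1 : ℝ)-(B 0 0 : ℝ)) = 0) ∧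
        ((A 1 0 : ℝ)*((B 0 0 : ℝ)-(B 1 1 : ℝ)) - (B 1 0 : ℝ)*((A 0 0 : ℝ)-(A 1 1 : ℝ)) = 0)) := by
      rintro ⟨h1, h2, h3⟩
      apply hAB
      ext i j
      fin_cases i <;> fin_cases j <;>
        simp only [Matrix.SpecialLinearGroup.coe_mul, Matrix.mul_apply, Fin.sum_univ_two,
          Fin.isValue, Fin.mk_zero, Fin.mk_one] <;> linarith
    have hTr : (C 0 0 : ℝ) + C 1 1 = 2 + (((A 0 1 : ℝ)*(B 1 0 : ℝ) - (A 1 0 : ℝ)*(B 0 1 : ℝ))^2 +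
        ((B 0 1 : ℝ)*((A 0 0 : ℝ)-(A 1 1 : ℝ)) + (A 0 1 : ℝ)*((B 1 1 : ℝ)-(B 0 0 : ℝ))) * ((A 1 0 : ℝ)*((B 0 0 : ℝ)-(B 1 1 : ℝ)) - (B 1 0 : ℝ)*((A 0 0 : ℝ)-(A 1 1 : ℝ)))) := by
      rw [hCdef]
      simp only [Matrix.SpecialLinearGroup.coe_mul, Matrix.SpecialLinearGroup.coe_inv,
        Matrix.adjugate_fin_two, Matrix.mul_apply, Fin.sum_univ_two, Fin.isValue,
        Matrix.of_apply, Matrix.cons_val', Matrix.cons_val_zero, Matrix.cons_val_one,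
        Matrix.head_cons, Matrix.head_fin_const, Matrix.empty_val', Matrix.cons_val_fin_one]
      linear_combination (2*(B 0 0 : ℝ)*(B 1 1 : ℝ) - 2*(B 0 1 : ℝ)*(B 1 0 : ℝ)) * hdA + 2 * hdB
    have hS : 0 < ((A 0 1 : ℝ)*(B 1 0 : ℝ) - (A 1 0 : ℝ)*(B 0 1 : ℝ))^2 +
        ((B 0 1 : ℝ)*((A 0 0 : ℝ)-(A 1 1 : ℝ)) + (A 0 1 : ℝ)*((B 1 1 : ℝ)-(B 0 0 : ℝ))) * ((A 1 0 : ℝ)*((B 0 0 : ℝ)-(B 1 1 : ℝ)) - (B 1 0 : ℝ)*((A 0 0 : ℝ)-(A 1 1 : ℝ))) := by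
      have hbc : (A 0 1 : ℝ)*(A 1 0 : ℝ) < 0 := by nlinarith [htr, sq_nonneg ((A 0 0 : ℝ)-(A 1 1 : ℝ))]
      have hc0 : (A 1 0 : ℝ) ≠ 0 := by intro h0; rw [h0] at hbc; simp at hbc
      by_cases hq : (A 1 0 : ℝ)*((B 0 0 : ℝ)-(B 1 1 : ℝ)) - (B 1 0 : ℝ)*((A 0 0 : ℝ)-(A 1 1 : ℝ)) = 0
      · by_cases hm : (A 0 1 : ℝ)*(B 1 0 : ℝ) - (A 1 0 : ℝ)*(B 0 1 : ℝ) = 0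
        · exfalso
          apply hMne
          refine ⟨hm, ?_, hq⟩
          have horth : ((A 0 0 : ℝ)-(A 1 1 : ℝ))*((A 0 1 : ℝ)*(B 1 0 : ℝ) - (A 1 0 : ℝ)*(B 0 1 : ℝ)) + (A 0 1 : ℝ)*((A 1 0 : ℝ)*((B 0 0 : ℝ)-(B 1 1 : ℝ)) - (B 1 0 : ℝ)*((A 0 0 : ℝ)-(A 1 1 : ℝ)))
              + (A 1 0 : ℝ)*((B 0 1 : ℝ)*((A 0 0 : ℝ)-(A 1 1 : ℝ)) + (A 0 1 : ℝ)*((B 1 1 : ℝ)-(B 0 0 : ℝ))) = 0 := by ring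
          rw [hm, hq] at horth
          have : (A 1 0 : ℝ) * ((B 0 1 : ℝ)*((A 0 0 : ℝ)-(A 1 1 : ℝ)) + (A 0 1 : ℝ)*((B 1 1 : ℝ)-(B 0 0 : ℝ))) = 0 := by linarith
          rcases mul_eq_zero.mp this with h' | h'
          · exact absurd h' hc0
          · exact h'
        · rw [hq, mul_zero]
          nlinarith [mul_self_pos.mpr hm]
      · have key : 4*(A 1 0 : ℝ)^2*(((A 0 1 : ℝ)*(B 1 0 : ℝ) - (A 1 0 : ℝ)*(B 0 1 : ℝ))^2 +
            ((B 0 1 : ℝ)*((A 0 0 : ℝ)-(A 1 1 : ℝ)) + (A 0 1 : ℝ)*((B 1 1 : ℝ)-(B 0 0 : ℝ))) * ((A 1 0 : ℝ)*((B 0 0 : ℝ)-(B 1 1 : ℝ)) - (B 1 0 : ℝ)*((A 0 0 : ℝ)-(A 1 1 : ℝ))))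
            = (2*(A 1 0 : ℝ)*((A 0 1 : ℝ)*(B 1 0 : ℝ) - (A 1 0 : ℝ)*(B 0 1 : ℝ)) - ((A 0 0 : ℝ)-(A 1 1 : ℝ))*((A 1 0 : ℝ)*((B 0 0 : ℝ)-(B 1 1 : ℝ)) - (B 1 0 : ℝ)*((A 0 0 : ℝ)-(A 1 1 : ℝ))))^2
              + (4 - ((A 0 0 : ℝ)+(A 1 1 : ℝ))^2)*((A 1 0 : ℝ)*((B 0 0 : ℝ)-(B 1 1 : ℝ)) - (B 1 0 : ℝ)*((A 0 0 : ℝ)-(A 1 1 : ℝ)))^2 := by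
          linear_combination (4*(A 1 1 : ℝ)^2*(B 1 0 : ℝ)^2 - 8*(A 1 0 : ℝ)*(A 1 1 : ℝ)*(B 1 0 : ℝ)*(B 1 1 : ℝ) + 8*(A 1 0 : ℝ)*(A 1 1 : ℝ)*(B 0 0 : ℝ)*(B 1 0 : ℝ)
            + 4*(A 1 0 : ℝ)^2*(B 1 1 : ℝ)^2 - 8*(A 1 0 : ℝ)^2*(B 0 0 : ℝ)*(B 1 1 : ℝ) + 4*(A 1 0 : ℝ)^2*(B 0 0 : ℝ)^2 - 8*(A 0 0 : ℝ)*(A 1 1 : ℝ)*(B 1 0 : ℝ)^2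
            + 8*(A 0 0 : ℝ)*(A 1 0 : ℝ)*(B 1 0 : ℝ)*(B 1 1 : ℝ) - 8*(A 0 0 : ℝ)*(A 1 0 : ℝ)*(B 0 0 : ℝ)*(B 1 0 : ℝ) + 4*(A 0 0 : ℝ)^2*(B 1 0 : ℝ)^2) * hdA
        have h4 : 0 < (4 - ((A 0 0 : ℝ)+(A 1 1 : ℝ))^2) * ((A 1 0 : ℝ)*((B 0 0 : ℝ)-(B 1 1 : ℝ)) - (B 1 0 : ℝ)*((A 0 0 : ℝ)-(A 1 1 : ℝ)))^2 :=
          mul_pos (by linarith) (by positivity)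
        have hc2 : 0 < 4*(A 1 0 : ℝ)^2 := by positivity
        nlinarith [key, h4, hc2, sq_nonneg (2*(A 1 0 : ℝ)*((A 0 1 : ℝ)*(B 1 0 : ℝ) - (A 1 0 : ℝ)*(B 0 1 : ℝ))
          - ((A 0 0 : ℝ)-(A 1 1 : ℝ))*((A 1 0 : ℝ)*((B 0 0 : ℝ)-(B 1 1 : ℝ)) - (B 1 0 : ℝ)*((A 0 0 : ℝ)-(A 1 1 : ℝ))))]
    refine ⟨C, mul_mem (mul_mem (mul_mem hA hB) (inv_mem hA)) (inv_mem hB),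
      acts_freely C (by nlinarith [hTr, hS]) ?_⟩
    rintro ⟨h01, h10, hEq⟩
    have hd2 : (C 0 0 : ℝ) * C 1 1 - C 0 1 * C 1 0 = 1 := by
      have := C.2; rw [Matrix.det_fin_two] at this; exact this
    rw [h01, hEq] at hd2
    nlinarith [hTr, hS, hd2, hEq]
end

section
/- Let A = [[13/100, 19/20], [0, 19/10]] and B = [[3/20, 0], [−3/50, 19/10]], regarded as invertible 2×2 real matrices. Then for every integer m, each of the matrices Aᵐ·B, Aᵐ·B⁻¹, Bᵐ·A, and Bᵐ·A⁻¹ satisfies trace² ≥ 4·det (hence has a real eigenvector, i.e., fixes a point of ℝP¹), while the commutator B⁻¹·A⁻¹·B·A satisfies trace(B⁻¹A⁻¹BA)² < 4·det(B⁻¹A⁻¹BA) = 4 (hence has no real eigenvector and fixes no point of ℝP¹). -/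
open Matrix

lemma eig_of_disc (M : Matrix (Fin 2) (Fin 2) ℝ) (h : 4 * M.det ≤ M.trace ^ 2) :
    ∃ v : Fin 2 → ℝ, v ≠ 0 ∧ ∃ μ : ℝ, M.mulVec v = μ • v := by
  set μ := (M.trace + Real.sqrt (M.trace ^ 2 - 4 * M.det)) / 2 with hμ
  have hs : Real.sqrt (M.trace ^ 2 - 4 * M.det) ^ 2 = M.trace ^ 2 - 4 * M.det :=
    Real.sq_sqrt (by linarith)
  have hdet : (M - μ • (1 : Matrix (Fin 2) (Fin 2) ℝ)).det = 0 := by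
    rw [Matrix.det_fin_two]
    rw [Matrix.det_fin_two, Matrix.trace_fin_two] at hs
    simp only [Matrix.sub_apply, Matrix.smul_apply, Matrix.one_apply_eq,
      Matrix.one_apply_ne (by decide : (0 : Fin 2) ≠ 1),
      Matrix.one_apply_ne (by decide : (1 : Fin 2) ≠ 0), smul_eq_mul, mul_one, mul_zero, sub_zero]
    rw [hμ, Matrix.det_fin_two, Matrix.trace_fin_two]
    nlinarith [hs]
  obtain ⟨v, hv, hmv⟩ := (Matrix.exists_mulVec_eq_zero_iff).mpr hdet
  refine ⟨v, hv, μ, ?_⟩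
  rw [Matrix.sub_mulVec, Matrix.smul_mulVec, Matrix.one_mulVec, sub_eq_zero] at hmv
  exact hmv

lemma no_eig_of_disc (M : Matrix (Fin 2) (Fin 2) ℝ) (h : M.trace ^ 2 < 4 * M.det) :
    ¬ ∃ v : Fin 2 → ℝ, v ≠ 0 ∧ ∃ μ : ℝ, M.mulVec v = μ • v := by
  rintro ⟨v, hv, μ, hmv⟩
  have hdet : (M - μ • (1 : Matrix (Fin 2) (Fin 2) ℝ)).det = 0 := by
    rw [← Matrix.exists_mulVec_eq_zero_iff]
    exact ⟨v, hv, by rw [Matrix.sub_mulVec, Matrix.smul_mulVec, Matrix.one_mulVec, hmv,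
      sub_self]⟩
  rw [Matrix.det_fin_two] at hdet
  simp only [Matrix.sub_apply, Matrix.smul_apply, Matrix.one_apply_eq,
    Matrix.one_apply_ne (by decide : (0 : Fin 2) ≠ 1),
    Matrix.one_apply_ne (by decide : (1 : Fin 2) ≠ 0), smul_eq_mul, mul_one, mul_zero,
    sub_zero] at hdet
  rw [Matrix.det_fin_two, Matrix.trace_fin_two] at h
  nlinarith [sq_nonneg (2 * μ - (M 0 0 + M 1 1)), hdet]

lemma gl2_inv_coe_A (A : GL (Fin 2) ℝ)
    (hA : (A : Matrix (Fin 2) (Fin 2) ℝ) = !![13/100, 19/20; 0, 19/10]) :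
    ((A⁻¹ : GL (Fin 2) ℝ) : Matrix (Fin 2) (Fin 2) ℝ) = !![100/13, -50/13; 0, 10/19] := by
  rw [Matrix.coe_units_inv, hA, Matrix.inv_def, Matrix.adjugate_fin_two, Matrix.det_fin_two_of]
  ext i j
  fin_cases i <;> fin_cases j <;> norm_num

lemma gl2_inv_coe_B (B : GL (Fin 2) ℝ)
    (hB : (B : Matrix (Fin 2) (Fin 2) ℝ) = !![3/20, 0; -3/50, 19/10]) :
    ((B⁻¹ : GL (Fin 2) ℝ) : Matrix (Fin 2) (Fin 2) ℝ) = !![20/3, 0; 4/19, 10/19] := by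
  rw [Matrix.coe_units_inv, hB, Matrix.inv_def, Matrix.adjugate_fin_two, Matrix.det_fin_two_of]
  ext i j
  fin_cases i <;> fin_cases j <;> norm_num

lemma gl2_pow_coe_A (A : GL (Fin 2) ℝ)
    (hA : (A : Matrix (Fin 2) (Fin 2) ℝ) = !![13/100, 19/20; 0, 19/10]) (m : ℤ) :
    ((A ^ m : GL (Fin 2) ℝ) : Matrix (Fin 2) (Fin 2) ℝ) =
      !![(13/100 : ℝ) ^ m, (95/177) * ((19/10 : ℝ) ^ m - (13/100 : ℝ) ^ m);
         0, (19/10 : ℝ) ^ m] := by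
  have hAinv := gl2_inv_coe_A A hA
  have ha : (13/100 : ℝ) ≠ 0 := by norm_num
  have hd : (19/10 : ℝ) ≠ 0 := by norm_num
  induction m using Int.induction_on with
  | zero => simp [Matrix.one_fin_two]
  | succ n ih =>
      rw [_root_.zpow_add_one, Units.val_mul, ih, hA, Matrix.mul_fin_two,
        zpow_add_one₀ ha, zpow_add_one₀ hd]
      ext i j
      fin_cases i <;> fin_cases j <;> simp <;> ring
  | pred n ih =>
      have h1 : (-(n : ℤ) - 1) = (-(n : ℤ)) + (-1) := by ring
      have h2 : A ^ (-(n : ℤ) - 1) = A ^ (-(n : ℤ)) * A⁻¹ := _root_.zpow_sub_one A _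
      rw [h2, Units.val_mul, ih, hAinv, Matrix.mul_fin_two, h1, zpow_add₀ ha, zpow_add₀ hd]
      ext i j
      fin_cases i <;> fin_cases j <;> simp [_root_.zpow_neg_one] <;> ring

lemma gl2_pow_coe_B (B : GL (Fin 2) ℝ)
    (hB : (B : Matrix (Fin 2) (Fin 2) ℝ) = !![3/20, 0; -3/50, 19/10]) (m : ℤ) :
    ((B ^ m : GL (Fin 2) ℝ) : Matrix (Fin 2) (Fin 2) ℝ) =
      !![(3/20 : ℝ) ^ m, 0;
         -(6/175) * ((19/10 : ℝ) ^ m - (3/20 : ℝ) ^ m), (19/10 : ℝ) ^ m] := by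
  have hBinv := gl2_inv_coe_B B hB
  have hb : (3/20 : ℝ) ≠ 0 := by norm_num
  have hd : (19/10 : ℝ) ≠ 0 := by norm_num
  induction m using Int.induction_on with
  | zero => simp [Matrix.one_fin_two]
  | succ n ih =>
      rw [_root_.zpow_add_one, Units.val_mul, ih, hB, Matrix.mul_fin_two,
        zpow_add_one₀ hb, zpow_add_one₀ hd]
      ext i j
      fin_cases i <;> fin_cases j <;> simp <;> ring
  | pred n ih =>
      have h1 : (-(n : ℤ) - 1) = (-(n : ℤ)) + (-1) := by ring
      have h2 : B ^ (-(n : ℤ) - 1) = B ^ (-(n : ℤ)) * B⁻¹ := _root_.zpow_sub_one B _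
      rw [h2, Units.val_mul, ih, hBinv, Matrix.mul_fin_two, h1, zpow_add₀ hb, zpow_add₀ hd]
      ext i j
      fin_cases i <;> fin_cases j <;> simp [_root_.zpow_neg_one] <;> ring

/-- For the matrices `A = [[13/100, 19/20], [0, 19/10]]` and `B = [[3/20, 0], [−3/50, 19/10]]`
in `GL(2, ℝ)`: for every integer `m`, each of `Aᵐ·B`, `Aᵐ·B⁻¹`, `Bᵐ·A`, `Bᵐ·A⁻¹` satisfies
`trace² ≥ 4·det` (hence has a real eigenvector, i.e., fixes a point of `ℝP¹`), while the
commutator `B⁻¹·A⁻¹·B·A` satisfies `trace² < 4·det = 4` (hence has no real eigenvector). -/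
theorem gl2_example_primitive_fixed_points (A B : GL (Fin 2) ℝ)
    (hA : (A : Matrix (Fin 2) (Fin 2) ℝ) = !![13/100, 19/20; 0, 19/10])
    (hB : (B : Matrix (Fin 2) (Fin 2) ℝ) = !![3/20, 0; -3/50, 19/10]) :
    (∀ m : ℤ, ∀ C ∈ ({A ^ m * B, A ^ m * B⁻¹, B ^ m * A, B ^ m * A⁻¹} : Set (GL (Fin 2) ℝ)),
      Matrix.trace (C : Matrix (Fin 2) (Fin 2) ℝ) ^ 2
          ≥ 4 * Matrix.det (C : Matrix (Fin 2) (Fin 2) ℝ) ∧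
      ∃ v : Fin 2 → ℝ, v ≠ 0 ∧ ∃ μ : ℝ,
        (C : Matrix (Fin 2) (Fin 2) ℝ).mulVec v = μ • v) ∧
    (Matrix.trace ((B⁻¹ * A⁻¹ * B * A : GL (Fin 2) ℝ) : Matrix (Fin 2) (Fin 2) ℝ) ^ 2
        < 4 * Matrix.det ((B⁻¹ * A⁻¹ * B * A : GL (Fin 2) ℝ) : Matrix (Fin 2) (Fin 2) ℝ) ∧
      Matrix.det ((B⁻¹ * A⁻¹ * B * A : GL (Fin 2) ℝ) : Matrix (Fin 2) (Fin 2) ℝ) = 1 ∧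
      ¬ ∃ v : Fin 2 → ℝ, v ≠ 0 ∧ ∃ μ : ℝ,
        ((B⁻¹ * A⁻¹ * B * A : GL (Fin 2) ℝ) : Matrix (Fin 2) (Fin 2) ℝ).mulVec v = μ • v) := by
  have hAinv := gl2_inv_coe_A A hA
  have hBinv := gl2_inv_coe_B B hB
  constructor
  · intro m C hC
    have hx : (0 : ℝ) < (13/100 : ℝ) ^ m := zpow_pos (by norm_num) m
    have hy : (0 : ℝ) < (19/10 : ℝ) ^ m := zpow_pos (by norm_num) m
    have hu : (0 : ℝ) < (3/20 : ℝ) ^ m := zpow_pos (by norm_num) m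
    simp only [Set.mem_insert_iff, Set.mem_singleton_iff] at hC
    have key : 4 * Matrix.det (C : Matrix (Fin 2) (Fin 2) ℝ)
        ≤ Matrix.trace (C : Matrix (Fin 2) (Fin 2) ℝ) ^ 2 := by
      rcases hC with h | h | h | h <;> rw [h, Units.val_mul]
      · rw [gl2_pow_coe_A A hA m, hB, Matrix.mul_fin_two, Matrix.trace_fin_two_of,
          Matrix.det_fin_two_of]
        nlinarith [sq_nonneg ((43/236 : ℝ) * (13/100 : ℝ) ^ m - (551/295) * (19/10 : ℝ) ^ m),
          mul_pos hx hy]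
      · rw [gl2_pow_coe_A A hA m, hBinv, Matrix.mul_fin_two, Matrix.trace_fin_two_of,
          Matrix.det_fin_two_of]
        nlinarith [sq_nonneg ((1160/177 : ℝ) * (13/100 : ℝ) ^ m - (2150/3363) * (19/10 : ℝ) ^ m),
          mul_pos hx hy]
      · rw [gl2_pow_coe_B B hB m, hA, Matrix.mul_fin_two, Matrix.trace_fin_two_of,
          Matrix.det_fin_two_of]
        nlinarith [sq_nonneg ((569/3500 : ℝ) * (3/20 : ℝ) ^ m - (6536/3500) * (19/10 : ℝ) ^ m),
          mul_pos hu hy]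
      · rw [gl2_pow_coe_B B hB m, hAinv, Matrix.mul_fin_two, Matrix.trace_fin_two_of,
          Matrix.det_fin_two_of]
        nlinarith [sq_nonneg ((688/91 : ℝ) * (3/20 : ℝ) ^ m - (1138/1729) * (19/10 : ℝ) ^ m),
          mul_pos hu hy]
    exact ⟨key, eig_of_disc _ key⟩
  · have hcomm : ((B⁻¹ * A⁻¹ * B * A : GL (Fin 2) ℝ) : Matrix (Fin 2) (Fin 2) ℝ)
        = !![20/3, 0; 4/19, 10/19] * !![100/13, -50/13; 0, 10/19]
          * !![3/20, 0; -3/50, 19/10] * !![13/100, 19/20; 0, 19/10] := by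
      rw [Units.val_mul, Units.val_mul, Units.val_mul, hAinv, hBinv, hA, hB]
    rw [hcomm]
    refine ⟨?_, ?_, ?_⟩
    · norm_num [Matrix.mul_fin_two, Matrix.trace_fin_two_of, Matrix.det_fin_two_of]
    · norm_num [Matrix.mul_fin_two, Matrix.det_fin_two_of]
    · apply no_eig_of_disc
      norm_num [Matrix.mul_fin_two, Matrix.trace_fin_two_of, Matrix.det_fin_two_of]
end

section
/- Let f, g : ℝ → ℝ be continuous maps with f monotone increasing, and let x₀ < x₁ be real numbers such that f(x₀) = g(x₀), f(x₀) < x₀, f(x₁) = x₁, and g(x₁) < x₁. Then for every integer n ≥ 1 there exists x ∈ [x₀, x₁] such that f⁽ⁿ⁾(x) = g(x), where f⁽ⁿ⁾ denotes the n-th iterate of f. -/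
/-- Let `f, g : ℝ → ℝ` be continuous with `f` monotone increasing, and `x₀ < x₁` with
`f(x₀) = g(x₀)`, `f(x₀) < x₀`, `f(x₁) = x₁`, `g(x₁) < x₁`. Then for every `n ≥ 1` there is
`x ∈ [x₀, x₁]` with `f⁽ⁿ⁾(x) = g(x)`, where `f⁽ⁿ⁾` is the `n`-th iterate of `f`. -/
theorem exists_iterate_eq_of_crossing (f g : ℝ → ℝ)
    (hfc : Continuous f) (hgc : Continuous g) (hfm : Monotone f)
    (x₀ x₁ : ℝ) (hx : x₀ < x₁)
    (h1 : f x₀ = g x₀) (h2 : f x₀ < x₀) (h3 : f x₁ = x₁) (h4 : g x₁ < x₁) :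
    ∀ n : ℕ, 1 ≤ n → ∃ x ∈ Set.Icc x₀ x₁, f^[n] x = g x := by
  intro n hn
  have key : ∀ m : ℕ, f^[m+1] x₀ ≤ f x₀ := by
    intro m
    induction m with
    | zero => simp
    | succ k ih =>
      have : f^[k+2] x₀ = f (f^[k+1] x₀) := Function.iterate_succ_apply' f _ _
      rw [this]
      exact le_trans (hfm ih) (hfm h2.le)
  obtain ⟨m, rfl⟩ : ∃ m, n = m + 1 := ⟨n - 1, (Nat.succ_pred_eq_of_pos hn).symm⟩
  have hA : f^[m+1] x₀ - g x₀ ≤ 0 := by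
    have := key m
    rw [h1] at this
    linarith
  have hx1 : f^[m+1] x₁ = x₁ := Function.iterate_fixed h3 _
  have hB : (0:ℝ) ≤ f^[m+1] x₁ - g x₁ := by rw [hx1]; linarith
  have hcont : ContinuousOn (fun x => f^[m+1] x - g x) (Set.Icc x₀ x₁) :=
    ((hfc.iterate _).sub hgc).continuousOn
  obtain ⟨x, hx, hfx⟩ := intermediate_value_Icc hx.le hcont ⟨hA, hB⟩
  simp only [] at hfx
  exact ⟨x, hx, sub_eq_zero.mp hfx⟩
end

section
/- Let f be an order-isomorphism of ℝ (a strictly increasing bijection ℝ → ℝ, necessarily a homeomorphism), let (gᵢ)_{i ∈ ι} be a family of order-isomorphisms of ℝ, and let (nᵢ), (mᵢ) be families of nonzero integers such that f ∘ gᵢ^{nᵢ} ∘ f⁻¹ = gᵢ^{mᵢ} for every i. If f has a fixed point and there exists a point fixed simultaneously by all gᵢ, then there exists a point p ∈ ℝ with f(p) = p and gᵢ(p) = p for every i. (Equivalently, in Proposition 8.3 of the paper: if the group generated by f and the gᵢ has no global fixed point on ℝ while ⋂ᵢ Fix(gᵢ) ≠ ∅, then Fix(f) = ∅.) -/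
private lemma pow_lt_of_lt {g : Equiv.Perm ℝ} (hg : StrictMono g) {x : ℝ}
    (hx : x < g x) : ∀ k : ℕ, x < (g ^ (k + 1)) x := by
  intro k
  induction k with
  | zero => simpa using hx
  | succ k ih =>
      have h1 : (g ^ (k + 2)) x = g ((g ^ (k + 1)) x) := by
        rw [pow_succ' g (k+1)]; rfl
      rw [h1]
      exact hx.trans_le (hg.monotone (le_of_lt ih))

private lemma fix_of_zpow_fix {g : Equiv.Perm ℝ} (hg : StrictMono g) {k : ℤ}
    (hk : k ≠ 0) {x : ℝ} (h : (g ^ k) x = x) : g x = x := by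
  by_contra hne
  have hginv : StrictMono (⇑g⁻¹) := by
    intro a b hab
    rw [← hg.lt_iff_lt]; simpa [Equiv.apply_symm_apply] using hab
  have key : ∀ (h : Equiv.Perm ℝ), StrictMono h → ∀ y : ℝ, y < h y →
      ∀ j : ℤ, 0 < j → y < (h ^ j) y := by
    intro h hh y hy j hj
    obtain ⟨k, rfl⟩ : ∃ k : ℕ, j = (k : ℤ) + 1 := ⟨(j - 1).toNat, by omega⟩
    have := pow_lt_of_lt hh hy k
    rwa [show ((k : ℤ) + 1) = ((k + 1 : ℕ) : ℤ) by push_cast; ring, zpow_natCast]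
  have main : ∀ j : ℤ, 0 < j → (g ^ j) x = x → False := by
    intro j hj hfix
    rcases lt_or_gt_of_ne hne with hlt | hgt
    · have hx : x < g⁻¹ x := by
        rw [← hg.lt_iff_lt]; simpa [Equiv.apply_symm_apply] using hlt
      have h3 := key g⁻¹ hginv x hx j hj
      rw [inv_zpow] at h3
      have h2 : ((g ^ j)⁻¹) x = x := by
        nth_rewrite 1 [← hfix]; exact Equiv.symm_apply_apply _ _
      rw [h2] at h3; exact lt_irrefl _ h3
    · have h3 := key g hg x hgt j hj
      rw [hfix] at h3; exact lt_irrefl _ h3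
  rcases hk.lt_or_gt with hneg | hpos
  · refine main (-k) (by omega) ?_
    have h2 : ((g ^ k)⁻¹) x = x := by
      nth_rewrite 1 [← h]; exact Equiv.symm_apply_apply _ _
    rwa [zpow_neg]
  · exact main k hpos h

/-- Let `f` be an order-isomorphism of `ℝ` (a strictly increasing bijection), `(gᵢ)` a family
of order-isomorphisms of `ℝ`, and `(nᵢ)`, `(mᵢ)` families of nonzero integers with
`f ∘ gᵢ^{nᵢ} ∘ f⁻¹ = gᵢ^{mᵢ}` for every `i`. If `f` has a fixed point and there is a point
fixed simultaneously by all `gᵢ`, then there is a point `p` fixed by `f` and by every `gᵢ`. -/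
theorem global_fixed_point_of_conj_relations {ι : Type*}
    (f : Equiv.Perm ℝ) (hf : StrictMono f)
    (g : ι → Equiv.Perm ℝ) (hg : ∀ i, StrictMono (g i))
    (n m : ι → ℤ) (hn : ∀ i, n i ≠ 0) (hm : ∀ i, m i ≠ 0)
    (hconj : ∀ i, f * g i ^ n i * f⁻¹ = g i ^ m i)
    (hfix : ∃ x : ℝ, f x = x) (hgfix : ∃ x : ℝ, ∀ i, g i x = x) :
    ∃ p : ℝ, f p = p ∧ ∀ i, g i p = p := by
  classical
  set S : Set ℝ := {x | ∀ i, g i x = x} with hS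
  obtain ⟨x₀, hx₀⟩ := hgfix
  obtain ⟨q, hq⟩ := hfix
  -- S is closed
  have hScl : IsClosed S := by
    have : S = ⋂ i, {x : ℝ | g i x = x} := by ext x; simp [hS, Set.mem_iInter]
    rw [this]
    refine isClosed_iInter fun i => ?_
    have hcont : Continuous (g i) :=
      (StrictMono.orderIsoOfSurjective (g i) (hg i) (g i).surjective).continuous
    exact isClosed_eq hcont continuous_id
  -- f maps S to S
  have hfS : ∀ x ∈ S, f x ∈ S := by
    intro x hx i
    refine fix_of_zpow_fix (hg i) (hm i) ?_
    have h1 : (g i ^ m i) (f x) = ((f * g i ^ n i * f⁻¹) : Equiv.Perm ℝ) (f x) := by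
      rw [hconj i]
    have h2 : ((f * g i ^ n i * f⁻¹) : Equiv.Perm ℝ) (f x) = f ((g i ^ n i) x) := by
      simp [Equiv.Perm.mul_apply]
    have h3 : (g i ^ n i) x = x := (Function.IsFixedPt.perm_zpow (hx i) (n i))
    rw [h1, h2, h3]
  -- f⁻¹ maps S to S
  have hfS' : ∀ x ∈ S, f⁻¹ x ∈ S := by
    intro x hx i
    refine fix_of_zpow_fix (hg i) (hn i) ?_
    have hc : (g i ^ n i : Equiv.Perm ℝ) = f⁻¹ * g i ^ m i * f := by
      rw [← hconj i]; group
    have h1 : (g i ^ n i) (f⁻¹ x) = f⁻¹ ((g i ^ m i) x) := by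
      rw [hc]; simp [Equiv.Perm.mul_apply]
    have h3 : (g i ^ m i) x = x := (Function.IsFixedPt.perm_zpow (hx i) (m i))
    rw [h1, h3]
  have hfinv : StrictMono (⇑f⁻¹) := by
    intro a b hab
    rw [← hf.lt_iff_lt]; simpa [Equiv.apply_symm_apply] using hab
  by_cases hA : ∃ x ∈ S, q ≤ x
  · -- p = inf (S ∩ [q,∞))
    set T : Set ℝ := S ∩ Set.Ici q with hT
    have hTne : T.Nonempty := by obtain ⟨x, hx, hqx⟩ := hA; exact ⟨x, hx, hqx⟩
    have hTcl : IsClosed T := hScl.inter isClosed_Ici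
    have hTbdd : BddBelow T := ⟨q, fun x hx => hx.2⟩
    set p := sInf T with hp
    have hpT : p ∈ T := hTcl.csInf_mem hTne hTbdd
    have hpq : q ≤ p := hpT.2
    have hfp : f p ∈ T := ⟨hfS p hpT.1, by
      have : f q ≤ f p := hf.monotone hpq
      rwa [hq] at this⟩
    have hfp' : f⁻¹ p ∈ T := ⟨hfS' p hpT.1, by
      have : f⁻¹ q ≤ f⁻¹ p := hfinv.monotone hpq
      have hq' : f⁻¹ q = q := f.symm_apply_eq.mpr hq.symm
      rwa [hq'] at this⟩
    have h1 : p ≤ f p := csInf_le hTbdd hfp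
    have h2 : p ≤ f⁻¹ p := csInf_le hTbdd hfp'
    have h3 : f p ≤ p := by
      have := hf.monotone h2
      rwa [Equiv.Perm.coe_inv, Equiv.apply_symm_apply] at this
    exact ⟨p, le_antisymm h3 h1, hpT.1⟩
  · -- S ⊆ (-∞, q), p = sup S
    push_neg at hA
    have hSne : S.Nonempty := ⟨x₀, hx₀⟩
    have hSbdd : BddAbove S := ⟨q, fun x hx => (hA x hx).le⟩
    set p := sSup S with hp
    have hpS : p ∈ S := hScl.csSup_mem hSne hSbdd
    have h1 : f p ≤ p := le_csSup hSbdd (hfS p hpS)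
    have h2 : f⁻¹ p ≤ p := le_csSup hSbdd (hfS' p hpS)
    have h3 : p ≤ f p := by
      have := hf.monotone h2
      rwa [Equiv.Perm.coe_inv, Equiv.apply_symm_apply] at this
    exact ⟨p, le_antisymm h1 h3, hpS⟩
end
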